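/- arXiv:1711.05252 — 5 statements merged into one kernel-verified Lean document; each statement's English description precedes it below -/
import Mathlib

section
/- Let p be a prime number and let A be a commutative ring in which every integer prime to p is invertible (a ℤ_(p)-algebra). Let (A, I, γ) and (B, J, η) be commutative rings equipped with divided power structures γ on the ideal I and η on the ideal J, and let φ : A → B be a ring homomorphism with φ(I) ⊆ J. Let T ⊆ I be a set generating the ideal I. Then φ is a homomorphism of divided power rings (i.e. η_n(φ(x)) = φ(γ_n(x)) for all n ≥ 0 and all x ∈ I) if and only if η_p(φ(t)) = φ(γ_p(t)) for all t ∈ T. -/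
universe u v

section Aux

open Nat Finset

variable (p : ℕ)

-- p does not divide uniformBell q p
theorem aux_not_dvd_uniformBell (hp : p.Prime) (q : ℕ) :
    ¬ p ∣ Nat.uniformBell q p := by
  haveI : Fact p.Prime := ⟨hp⟩
  have hmul := Nat.uniformBell_mul_eq q hp.ne_zero
  have hne : Nat.uniformBell q p ≠ 0 := by
    intro h0
    rw [h0, zero_mul, zero_mul] at hmul
    exact (Nat.factorial_ne_zero _) hmul.symm
  intro hdvd
  have h1 : padicValNat p (Nat.uniformBell q p) = 0 := by
    have hfacne : ∀ m : ℕ, m ! ≠ 0 := fun m => Nat.factorial_ne_zero m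
    have hppow : (p ! ^ q : ℕ) ≠ 0 := pow_ne_zero _ (hfacne p)
    have e1 : padicValNat p (Nat.uniformBell q p * p ! ^ q * q !)
        = padicValNat p (Nat.uniformBell q p) + q * padicValNat p (p !)
          + padicValNat p (q !) := by
      rw [padicValNat.mul (mul_ne_zero hne hppow) (hfacne q),
        padicValNat.mul hne hppow, padicValNat.pow _ _]
    have e2 : padicValNat p ((q * p)!) = padicValNat p (q !) + q := by
      rw [mul_comm q p]; exact padicValNat_factorial_mul q
    have e3 : padicValNat p (p !) = 1 := by
      have := padicValNat_factorial_mul (p := p) 1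
      simpa using this
    rw [hmul, e2, e3, mul_one] at e1
    omega
  have := one_le_padicValNat_of_dvd hne hdvd
  omega

-- p does not divide choose n (n % p) when n % p ≠ 0
theorem aux_not_dvd_choose (hp : p.Prime) (n : ℕ) (_hr : n % p ≠ 0) :
    ¬ p ∣ Nat.choose n (n % p) := by
  haveI : Fact p.Prime := ⟨hp⟩
  intro hdvd
  have hmod := Choose.choose_modEq_choose_mod_mul_choose_div_nat (p := p) (n := n) (k := n % p)
  have hrp : n % p < p := Nat.mod_lt _ hp.pos
  rw [Nat.mod_mod_of_dvd n dvd_rfl, Nat.div_eq_of_lt hrp, Nat.choose_self,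
    Nat.choose_zero_right, mul_one] at hmod
  have h0 : Nat.choose n (n % p) % p = 0 := Nat.mod_eq_zero_of_dvd hdvd
  have h1 : Nat.choose n (n % p) % p = 1 % p := hmod
  rw [Nat.mod_eq_of_lt hp.one_lt] at h1
  omega

end Aux

/-- **Langer, Corollary 1.5.** Let `p` be a prime and let `A` be a `ℤ_(p)`-algebra (every
integer prime to `p` is invertible in `A`). Let `(A, I, γ)` and `(B, J, η)` be divided power
rings and `φ : A → B` a ring homomorphism with `φ(I) ⊆ J`. Let `T ⊆ I` generate the ideal
`I`. Then `φ` is a homomorphism of divided power rings if and only if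
`η_p(φ(t)) = φ(γ_p(t))` for all `t ∈ T`. -/
theorem isDPMorphism_iff_on_generators (p : ℕ) (hp : p.Prime)
    {A : Type u} {B : Type v} [CommRing A] [CommRing B]
    (hA : ∀ m : ℤ, IsCoprime m (p : ℤ) → IsUnit (m : A))
    {I : Ideal A} {J : Ideal B} (γ : DividedPowers I) (η : DividedPowers J)
    (φ : A →+* B) (hφ : ∀ x ∈ I, φ x ∈ J)
    (T : Set A) (hTI : T ⊆ I) (hT : Ideal.span T = I) :
    (∀ (n : ℕ), ∀ x ∈ I, η.dpow n (φ x) = φ (γ.dpow n x)) ↔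
      (∀ t ∈ T, η.dpow p (φ t) = φ (γ.dpow p t)) := by

  constructor
  · exact fun h t ht => h p t (hTI ht)
  · intro hgen
    -- units from naturals coprime to p
    have hunitB : ∀ c : ℕ, ¬ p ∣ c → IsUnit (c : B) := by
      intro c hc
      have hcop : IsCoprime ((c : ℤ)) ((p : ℤ)) := by
        rw [Int.isCoprime_iff_gcd_eq_one]
        exact_mod_cast (Nat.coprime_comm.mp (hp.coprime_iff_not_dvd.mpr hc))
      have h1 : IsUnit ((c : ℤ) : A) := hA c hcop
      have h2 : IsUnit (c : A) := by rwa [Int.cast_natCast] at h1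
      have := h2.map φ
      rwa [map_natCast] at this
    -- step 1 : for n < p
    have step1 : ∀ n, n < p → ∀ x ∈ I, η.dpow n (φ x) = φ (γ.dpow n x) := by
      intro n hn x hx
      have hfac : ¬ p ∣ (Nat.factorial n) := fun h =>
        absurd ((Nat.Prime.dvd_factorial hp).mp h) (not_le.mpr hn)
      refine (hunitB ((Nat.factorial n)) hfac).mul_left_cancel ?_
      rw [η.factorial_mul_dpow_eq_pow (n := n) (hφ x hx)]
      calc (φ x) ^ n = φ (x ^ n) := (map_pow φ x n).symm
        _ = φ (((Nat.factorial n) : A) * γ.dpow n x) := by rw [γ.factorial_mul_dpow_eq_pow (n := n) hx]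
        _ = ((Nat.factorial n) : B) * φ (γ.dpow n x) := by rw [map_mul, map_natCast]
    -- step 2 : for n = p, all x ∈ I, by span induction
    have step2 : ∀ x ∈ I, η.dpow p (φ x) = φ (γ.dpow p x) := by
      intro x hx
      rw [← hT] at hx
      induction hx using Submodule.span_induction with
      | mem t ht => exact hgen t ht
      | zero =>
        rw [map_zero, η.dpow_eval_zero hp.ne_zero, γ.dpow_eval_zero hp.ne_zero, map_zero]
      | add x y hx hy ihx ihy =>
        replace hx : x ∈ I := by rw [← hT]; exact hx
        replace hy : y ∈ I := by rw [← hT]; exact hy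
        have hx' : φ x ∈ J := hφ x hx
        have hy' : φ y ∈ J := hφ y hy
        have key : ∀ z ∈ I, η.dpow p (φ z) = φ (γ.dpow p z) →
            ∀ k ≤ p, η.dpow k (φ z) = φ (γ.dpow k z) := by
          intro z hz hzp k hk
          rcases lt_or_eq_of_le hk with h | h
          · exact step1 k h z hz
          · rw [h]; exact hzp
        rw [map_add, η.dpow_add (n := p) hx' hy', γ.dpow_add (n := p) hx hy, map_sum]
        refine Finset.sum_congr rfl ?_
        intro k hk
        rw [Finset.HasAntidiagonal.mem_antidiagonal] at hk
        rw [map_mul, key x hx ihx k.1 (by omega), key y hy ihy k.2 (by omega)]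
      | smul a x hx ihx =>
        replace hx : x ∈ I := by rw [← hT]; exact hx
        rw [smul_eq_mul, map_mul, η.dpow_mul (n := p) (hφ x hx), γ.dpow_mul (n := p) hx,
          map_mul, map_pow, ihx]
    -- main induction
    intro n
    induction n using Nat.strong_induction_on with
    | _ n IH =>
      intro x hx
      rcases lt_or_ge n p with hnp | hnp
      · exact step1 n hnp x hx
      · rcases Nat.eq_zero_or_pos (n % p) with hr | hr
        · -- n = p * q
          obtain ⟨q, rfl⟩ : p ∣ n := Nat.dvd_of_mod_eq_zero hr
          have hq : 0 < q := by
            rcases Nat.eq_zero_or_pos q with h | h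
            · subst h; rw [mul_zero] at hnp; exact absurd hnp (not_le.mpr hp.pos)
            · exact h
          have hqn : q < p * q := by
            have h := (Nat.mul_lt_mul_right hq).mpr hp.one_lt
            simpa using h
          have hc := aux_not_dvd_uniformBell p hp q
          refine (hunitB _ hc).mul_left_cancel ?_
          have hmem : γ.dpow p x ∈ I := γ.dpow_mem hp.ne_zero hx
          calc (↑(Nat.uniformBell q p) : B) * η.dpow (p * q) (φ x)
              = η.dpow q (η.dpow p (φ x)) := by
                rw [η.dpow_comp (m := q) hp.ne_zero (hφ x hx), mul_comm q p]
            _ = η.dpow q (φ (γ.dpow p x)) := by rw [step2 x hx]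
            _ = φ (γ.dpow q (γ.dpow p x)) := IH q hqn _ hmem
            _ = φ ((Nat.uniformBell q p : A) * γ.dpow (p * q) x) := by
                rw [γ.dpow_comp (m := q) hp.ne_zero hx, mul_comm q p]
            _ = (↑(Nat.uniformBell q p) : B) * φ (γ.dpow (p * q) x) := by
                rw [map_mul, map_natCast]
        · -- n % p ≠ 0
          set r := n % p with hrdef
          have hrp : r < p := Nat.mod_lt _ hp.pos
          have hrn : r < n := lt_of_lt_of_le hrp hnp
          have hadd : r + (n - r) = n := by omega
          have hc := aux_not_dvd_choose p hp n (by omega)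
          refine (hunitB _ hc).mul_left_cancel ?_
          have e1 := η.mul_dpow (m := r) (n := n - r) (hφ x hx)
          have e2 := γ.mul_dpow (m := r) (n := n - r) hx
          rw [hadd] at e1 e2
          calc (↑(n.choose r) : B) * η.dpow n (φ x)
              = η.dpow r (φ x) * η.dpow (n - r) (φ x) := e1.symm
            _ = φ (γ.dpow r x) * φ (γ.dpow (n - r) x) := by
                rw [step1 r hrp x hx, IH (n - r) (by omega) x hx]
            _ = φ ((n.choose r : A) * γ.dpow n x) := by rw [← map_mul, e2]
            _ = (↑(n.choose r) : B) * φ (γ.dpow n x) := by rw [map_mul, map_natCast]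
end

section
/- Let k be a field of characteristic p > 0 and let 2 ≤ i_j ≤ p for j = 1, ..., n. Let A = k[x₁, ..., xₙ]/(x₁^{i₁}, ..., xₙ^{iₙ}) with its unique divided power structure γ on the ideal I_A = (x₁, ..., xₙ)A satisfying γ_p(xᵢ) = 0 for all i, and let B = k[y_{l,j} : 1 ≤ l ≤ n, 1 ≤ j ≤ i_l − 1]/(y_{l,j}² : all l, j) with its unique divided power structure δ on the ideal I_B generated by all y_{l,j} satisfying δ_p(y_{l,j}) = 0 for all l, j. Then the k-algebra homomorphism φ : A → B determined by x_l ↦ ∑_{j=1}^{i_l−1} y_{l,j} is well-defined, injective, satisfies φ(I_A) ⊆ I_B, and is a homomorphism of divided power rings (A, I_A, γ) → (B, I_B, δ). -/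
universe u

open Finset

theorem aux_choose_mod (p : ℕ) (hp : p.Prime) (q r : ℕ) (hr : r < p) :
    ¬ p ∣ (r + q * p).choose r := by
  haveI : Fact p.Prime := ⟨hp⟩
  have h := Choose.choose_modEq_choose_mod_mul_choose_div_nat (p := p) (n := r + q * p) (k := r)
  have h1 : (r + q * p) % p = r := by
    rw [Nat.add_mul_mod_self_right, Nat.mod_eq_of_lt hr]
  have h2 : (r + q * p) / p = q := by
    rw [Nat.add_mul_div_right _ _ hp.pos, Nat.div_eq_of_lt hr, zero_add]
  rw [h1, h2, Nat.mod_eq_of_lt hr, Nat.div_eq_of_lt hr, Nat.choose_self, Nat.choose_zero_right,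
    one_mul] at h
  have h3 : (r + q * p).choose r % p = 1 % p := h
  rw [Nat.one_mod_eq_one.mpr hp.one_lt.ne'] at h3
  intro hdvd
  have h4 : (r + q * p).choose r % p = 0 := Nat.mod_eq_zero_of_dvd hdvd
  omega

theorem aux_uniformBell_not_dvd (p : ℕ) (hp : p.Prime) (q : ℕ) :
    ¬ p ∣ Nat.uniformBell q p := by
  have hp1 : 2 ≤ p := hp.two_le
  induction q with
  | zero =>
    rw [Nat.uniformBell_zero_left]
    intro h; have := Nat.le_of_dvd one_pos h; omega
  | succ m ih =>
    rw [Nat.uniformBell_succ_left, hp.dvd_mul]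
    rintro (h | h)
    · have he : m * p + p - 1 = (p-1) + m * p := by omega
      rw [he] at h
      exact aux_choose_mod p hp m (p-1) (by omega) h
    · exact ih h
section DP
variable {p : ℕ} {R : Type*} [CommRing R] {I : Ideal R}

theorem aux_dpow_eq_inv_smul (k : Type*) [Field k] [CharP k p] [Algebra k R]
    (D : DividedPowers I) {x : R} (hx : x ∈ I) {m : ℕ}
    (hm : (m.factorial : k) ≠ 0) : D.dpow m x = ((m.factorial : k)⁻¹) • x ^ m := by
  have h := D.factorial_mul_dpow_eq_pow (n := m) hx
  have h2 : ((m.factorial : k)) • D.dpow m x = x ^ m := by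
    rw [Algebra.smul_def, map_natCast]; exact h
  rw [← h2, ← smul_assoc, smul_eq_mul, inv_mul_cancel₀ hm, one_smul]

theorem aux_natCast_isUnit (k : Type*) [Field k] [CharP k p] [Algebra k R]
    {c : ℕ} (hc : ¬ p ∣ c) : IsUnit ((c : R)) := by
  have h1 : ((c : k)) ≠ 0 := by rw [Ne, CharP.cast_eq_zero_iff k p]; exact hc
  have := (isUnit_iff_ne_zero.mpr h1).map (algebraMap k R)
  rwa [map_natCast] at this

theorem aux_dpow_eq_zero_of_ge (k : Type*) [Field k] [CharP k p] [Algebra k R]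
    (hp : p.Prime) (D : DividedPowers I) {x : R} (hx : x ∈ I)
    (h0 : D.dpow p x = 0) {m : ℕ} (hm : p ≤ m) : D.dpow m x = 0 := by
  have hdm := Nat.div_add_mod m p
  have hmp : m % p < p := Nat.mod_lt _ hp.pos
  have hqp : m / p * p = p * (m / p) := mul_comm _ _
  have hq : m / p ≠ 0 := by
    intro h; rw [h] at hdm; omega
  have hcomp := D.dpow_comp (m := m / p) (n := p) hp.ne_zero hx
  rw [h0, D.dpow_eval_zero hq] at hcomp
  have hUB : IsUnit ((Nat.uniformBell (m / p) p : R)) :=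
    aux_natCast_isUnit k (aux_uniformBell_not_dvd p hp _)
  have hmul : D.dpow (m / p * p) x = 0 := by
    have := hcomp.symm
    rwa [hUB.mul_right_eq_zero] at this
  rcases Nat.eq_zero_or_pos (m % p) with hr | hr
  · have : m = m / p * p := by omega
    rwa [this]
  · have hmd := D.mul_dpow (m := m % p) (n := m / p * p) hx
    rw [hmul, mul_zero] at hmd
    have hC : IsUnit (((m % p + m / p * p).choose (m % p) : R)) :=
      aux_natCast_isUnit k (aux_choose_mod p hp (m / p) (m % p) hmp)
    have hmeq : m % p + m / p * p = m := by omega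
    rw [hmeq] at hmd hC
    have := hmd.symm
    rwa [hC.mul_right_eq_zero] at this

theorem aux_dpow_sum_eq_zero (D : DividedPowers I) {ι : Type*} [DecidableEq ι]
    (s : Finset ι) (f : ι → R) (hmem : ∀ j ∈ s, f j ∈ I)
    (hz : ∀ j ∈ s, ∀ r, 2 ≤ r → D.dpow r (f j) = 0) :
    ∀ m, s.card < m → D.dpow m (∑ j ∈ s, f j) = 0 := by
  induction s using Finset.induction with
  | empty =>
    intro m hm
    simpa using D.dpow_eval_zero (by omega : m ≠ 0)
  | @insert a s ha ih =>
    intro m hm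
    rw [Finset.sum_insert ha,
      D.dpow_add (n := m) (hmem a (Finset.mem_insert_self a s))
        (Ideal.sum_mem _ fun j hj => hmem j (Finset.mem_insert_of_mem hj))]
    apply Finset.sum_eq_zero
    rintro ⟨u, v⟩ huv
    rw [Finset.HasAntidiagonal.mem_antidiagonal] at huv
    rcases Nat.lt_or_ge u 2 with hu | hu
    · have hv : s.card < v := by
        rw [Finset.card_insert_of_notMem ha] at hm; omega
      rw [ih (fun j hj => hmem j (Finset.mem_insert_of_mem hj))
        (fun j hj => hz j (Finset.mem_insert_of_mem hj)) v hv, mul_zero]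
    · rw [hz a (Finset.mem_insert_self a s) u hu, zero_mul]
end DP
section SumPow
variable {R : Type*} [CommRing R]

theorem aux_sum_pow_eq_zero {ι : Type*} [DecidableEq ι] (s : Finset ι) (f : ι → R)
    (h : ∀ j ∈ s, f j ^ 2 = 0) : ∀ m, s.card < m → (∑ j ∈ s, f j) ^ m = 0 := by
  induction s using Finset.induction with
  | empty => intro m hm; rw [Finset.sum_empty, zero_pow (by omega : m ≠ 0)]
  | @insert a s ha ih =>
    intro m hm
    rw [Finset.card_insert_of_notMem ha] at hm
    rw [Finset.sum_insert ha, add_pow]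
    apply Finset.sum_eq_zero
    intro u hu
    rw [Finset.mem_range] at hu
    rcases Nat.lt_or_ge u 2 with h2 | h2
    · rw [ih (fun j hj => h j (Finset.mem_insert_of_mem hj)) (m - u) (by omega)]
      rw [mul_zero, zero_mul]
    · have : f a ^ u = 0 := by
        calc f a ^ u = f a ^ 2 * f a ^ (u - 2) := by rw [← pow_add]; congr 1; omega
        _ = 0 := by rw [h a (Finset.mem_insert_self a s), zero_mul]
      rw [this, zero_mul, zero_mul]
end SumPow

section SupportLemma
variable {σ : Type*} {R : Type*} [CommRing R]

/-- Every exponent appearing in an element of the ideal generated by `X (v i) ^ (c i)`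
dominates one of the generator exponents. -/
theorem aux_mem_span_pow_support {τ : Type*} (v : τ → σ) (c : τ → ℕ)
    {f : MvPolynomial σ R} (hf : f ∈ Ideal.span (Set.range fun t => (MvPolynomial.X (v t) : MvPolynomial σ R) ^ c t)) :
    ∀ d ∈ f.support, ∃ t, c t ≤ d (v t) := by
  classical
  let M : Ideal (MvPolynomial σ R) :=
    { carrier := {g | ∀ d ∈ g.support, ∃ t, c t ≤ d (v t)}
      zero_mem' := by intro d hd; simp at hd
      add_mem' := by
        intro g h hg hh d hd
        have := MvPolynomial.support_add hd
        rw [Finset.mem_union] at this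
        rcases this with h1 | h1
        exacts [hg d h1, hh d h1]
      smul_mem' := by
        intro q g hg d hd
        rw [smul_eq_mul] at hd
        obtain ⟨d₁, hd₁, d₂, hd₂, rfl⟩ := Finset.mem_add.mp (MvPolynomial.support_mul q g hd)
        obtain ⟨t, ht⟩ := hg d₂ hd₂
        exact ⟨t, le_trans ht (by simp)⟩ }
  have hle : Ideal.span (Set.range fun t => (MvPolynomial.X (v t) : MvPolynomial σ R) ^ c t) ≤ M := by
    rw [Ideal.span_le]
    rintro _ ⟨t, rfl⟩
    intro d hd
    simp only [MvPolynomial.X_pow_eq_monomial, MvPolynomial.support_monomial] at hd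
    split_ifs at hd
    · simp at hd
    · rw [Finset.mem_singleton] at hd
      subst hd
      exact ⟨t, by simp⟩
  exact hle hf
end SupportLemma
section CountLemma
variable {σ : Type*} {R : Type*} [CommRing R]

theorem aux_sub_single_support [DecidableEq σ] (d : σ →₀ ℕ) (j : σ) (hj : d j = 1) :
    (d - Finsupp.single j 1).support = d.support.erase j := by
  ext x
  rw [Finsupp.mem_support_iff, Finset.mem_erase, Finsupp.mem_support_iff, Finsupp.tsub_apply,
    Finsupp.single_apply]
  rcases eq_or_ne x j with rfl | hx
  · simp [hj]
  · simp only [if_neg (Ne.symm hx), Nat.sub_zero]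
    exact ⟨fun h => ⟨hx, h⟩, fun h => h.2⟩

theorem aux_coeff_sum_X_pow [DecidableEq σ] (s : Finset σ) :
    ∀ (m : ℕ) (d : σ →₀ ℕ), (∀ x, d x ≤ 1) →
    MvPolynomial.coeff d ((∑ j ∈ s, MvPolynomial.X j : MvPolynomial σ R) ^ m) =
      if d.support ⊆ s ∧ d.support.card = m then (m.factorial : R) else 0 := by
  intro m
  induction m with
  | zero =>
    intro d hd
    rw [pow_zero, MvPolynomial.coeff_one]
    by_cases h0 : d = 0
    · subst h0; simp
    · rw [if_neg (by exact fun h => h0 h.symm), if_neg]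
      rintro ⟨-, hc⟩
      exact h0 (by rwa [Finset.card_eq_zero, Finsupp.support_eq_empty] at hc)
  | succ m ih =>
    intro d hd
    rw [pow_succ', Finset.sum_mul, MvPolynomial.coeff_sum]
    simp only [MvPolynomial.coeff_X_mul']
    have key : ∀ j ∈ s, (if j ∈ d.support then
        MvPolynomial.coeff (d - Finsupp.single j 1)
          ((∑ j ∈ s, MvPolynomial.X j : MvPolynomial σ R) ^ m) else 0) =
        (if j ∈ d.support then
          (if d.support ⊆ s ∧ d.support.card = m + 1 then (m.factorial : R) else 0) else 0) := by
      intro j hjs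
      by_cases hj : j ∈ d.support
      · have hj1 : d j = 1 := by
          have := hd j
          have := Finsupp.mem_support_iff.mp hj
          omega
        have hsupp := aux_sub_single_support d j hj1
        rw [if_pos hj, if_pos hj, ih _ (fun x => le_trans (by
          rw [Finsupp.tsub_apply]; exact Nat.sub_le _ _) (hd x))]
        rw [hsupp]
        by_cases h : d.support ⊆ s ∧ d.support.card = m + 1
        · rw [if_pos ⟨fun x hx => h.1 (Finset.mem_of_mem_erase hx), by
            rw [Finset.card_erase_of_mem hj, h.2]; omega⟩, if_pos h]
        · rw [if_neg, if_neg h]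
          rintro ⟨h1, h2⟩
          refine h ⟨?_, ?_⟩
          · intro x hx
            rcases eq_or_ne x j with rfl | hxj
            · exact hjs
            · exact h1 (Finset.mem_erase.mpr ⟨hxj, hx⟩)
          · rw [Finset.card_erase_of_mem hj] at h2
            have : 0 < d.support.card := Finset.card_pos.mpr ⟨j, hj⟩
            omega
      · rw [if_neg hj, if_neg hj]
    rw [Finset.sum_congr rfl key]
    by_cases h : d.support ⊆ s ∧ d.support.card = m + 1
    · simp only [if_pos h]
      rw [Finset.sum_ite_mem, Finset.inter_eq_right.mpr h.1, Finset.sum_const, h.2,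
        nsmul_eq_mul, Nat.factorial_succ]
      push_cast
      ring
    · simp only [if_neg h, ite_self, Finset.sum_const_zero]
end CountLemma
section ProdLemma
variable {σ : Type*} {ι : Type*} {R : Type*} [CommRing R] [Nontrivial R]

theorem aux_support_subset_of_coeff_ne_zero [DecidableEq σ] (s : Finset σ) (m : ℕ)
    (d : σ →₀ ℕ)
    (h : MvPolynomial.coeff d ((∑ j ∈ s, MvPolynomial.X j : MvPolynomial σ R) ^ m) ≠ 0) :
    ∀ x ∈ d.support, x ∈ s := by
  intro x hx
  have hd := MvPolynomial.mem_support_iff.mpr h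
  have hv : x ∈ ((∑ j ∈ s, MvPolynomial.X j : MvPolynomial σ R) ^ m).vars :=
    (MvPolynomial.mem_vars x).mpr ⟨d, hd, hx⟩
  have hv2 := MvPolynomial.vars_pow (∑ j ∈ s, MvPolynomial.X j : MvPolynomial σ R) m hv
  have hv3 := MvPolynomial.vars_sum_subset s (fun j => (MvPolynomial.X j : MvPolynomial σ R)) hv2
  rw [Finset.mem_biUnion] at hv3
  obtain ⟨j, hj, hxj⟩ := hv3
  rw [MvPolynomial.vars_X, Finset.mem_singleton] at hxj
  exact hxj ▸ hj

theorem aux_prod_support [DecidableEq σ] [DecidableEq ι] (β : σ → ι) (S : ι → Finset σ)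
    (hS : ∀ l x, x ∈ S l ↔ β x = l) (a : ι → ℕ) (t : Finset ι) :
    ∀ (e : σ →₀ ℕ),
      MvPolynomial.coeff e (∏ l ∈ t, (∑ x ∈ S l, MvPolynomial.X x : MvPolynomial σ R) ^ a l) ≠ 0 →
      ∀ x ∈ e.support, β x ∈ t := by
  classical
  induction t using Finset.induction with
  | empty =>
    intro e he x hx
    rw [Finset.prod_empty, MvPolynomial.coeff_one] at he
    exfalso
    by_cases h0 : (0 : σ →₀ ℕ) = e
    · rw [← h0] at hx; simp at hx
    · rw [if_neg h0] at he; exact he rfl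
  | @insert l₀ t hl₀ ih =>
    intro e he x hx
    rw [Finset.prod_insert hl₀] at he
    have hmem := MvPolynomial.mem_support_iff.mpr he
    obtain ⟨d₁, hd₁, d₂, hd₂, rfl⟩ := Finset.mem_add.mp (MvPolynomial.support_mul _ _ hmem)
    have hx' := Finsupp.support_add hx
    rw [Finset.mem_union] at hx'
    rcases hx' with h1 | h1
    · have := aux_support_subset_of_coeff_ne_zero (S l₀) (a l₀) d₁
        (MvPolynomial.mem_support_iff.mp hd₁) x h1
      rw [hS] at this
      rw [this]
      exact Finset.mem_insert_self _ _
    · exact Finset.mem_insert_of_mem (ih d₂ (MvPolynomial.mem_support_iff.mp hd₂) x h1)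

theorem aux_coeff_prod [DecidableEq σ] [DecidableEq ι] (β : σ → ι) (S : ι → Finset σ)
    (hS : ∀ l x, x ∈ S l ↔ β x = l) (a : ι → ℕ) (t : Finset ι) :
    ∀ (e : σ →₀ ℕ), (∀ x, e x ≤ 1) →
      MvPolynomial.coeff e (∏ l ∈ t, (∑ x ∈ S l, MvPolynomial.X x : MvPolynomial σ R) ^ a l) =
      if (∀ x ∈ e.support, β x ∈ t) ∧
          (∀ l ∈ t, (e.support.filter fun x => β x = l).card = a l)
        then ((∏ l ∈ t, (a l).factorial : ℕ) : R) else 0 := by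
  classical
  induction t using Finset.induction with
  | empty =>
    intro e he
    rw [Finset.prod_empty, MvPolynomial.coeff_one]
    by_cases h0 : e = 0
    · subst h0; simp
    · rw [if_neg (fun h => h0 h.symm), if_neg]
      rintro ⟨h1, -⟩
      obtain ⟨x, hx⟩ := Finsupp.support_nonempty_iff.mpr h0
      exact absurd (h1 x hx) (Finset.notMem_empty _)
  | @insert l₀ t hl₀ ih =>
    intro e he
    rw [Finset.prod_insert hl₀, MvPolynomial.coeff_mul]
    set e₁ := e.filter (fun x => β x = l₀) with he₁def
    set e₂ := e.filter (fun x => ¬ β x = l₀) with he₂def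
    have hsum : e₁ + e₂ = e := by
      ext x
      by_cases h : β x = l₀ <;>
        simp [he₁def, he₂def, Finsupp.filter_apply, h, Finsupp.add_apply]
    have hs₁ : e₁.support = e.support.filter (fun x => β x = l₀) := by
      ext x
      by_cases h : β x = l₀ <;>
        simp [he₁def, Finsupp.mem_support_iff, Finsupp.filter_apply, h]
    have hs₂ : e₂.support = e.support.filter (fun x => ¬ β x = l₀) := by
      ext x
      by_cases h : β x = l₀ <;>
        simp [he₂def, Finsupp.mem_support_iff, Finsupp.filter_apply, h]
    rw [Finset.sum_eq_single_of_mem (e₁, e₂) (Finset.HasAntidiagonal.mem_antidiagonal.mpr hsum) ?other]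
    case other =>
      rintro ⟨b₁, b₂⟩ hb hne
      rw [Finset.HasAntidiagonal.mem_antidiagonal] at hb
      by_contra hc
      have h1 : MvPolynomial.coeff b₁ ((∑ x ∈ S l₀, MvPolynomial.X x : MvPolynomial σ R) ^ a l₀) ≠ 0 :=
        left_ne_zero_of_mul hc
      have h2 : MvPolynomial.coeff b₂ (∏ l ∈ t, (∑ x ∈ S l, MvPolynomial.X x : MvPolynomial σ R) ^ a l) ≠ 0 :=
        right_ne_zero_of_mul hc
      have hb₁ : ∀ x ∈ b₁.support, β x = l₀ := fun x hx =>
        (hS l₀ x).mp (aux_support_subset_of_coeff_ne_zero _ _ _ h1 x hx)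
      have hb₂ : ∀ x ∈ b₂.support, β x ∈ t := aux_prod_support β S hS a t b₂ h2
      have hbe : b₁ = e₁ := by
        ext x
        have happ : b₁ x + b₂ x = e x := by rw [← Finsupp.add_apply, hb]
        by_cases h : β x = l₀
        · have : b₂ x = 0 := by
            by_contra h2x
            exact hl₀ (h ▸ hb₂ x (Finsupp.mem_support_iff.mpr h2x))
          rw [he₁def]
          simp only [Finsupp.filter_apply, if_pos h]
          omega
        · have : b₁ x = 0 := by
            by_contra h1x
            exact h (hb₁ x (Finsupp.mem_support_iff.mpr h1x))
          rw [he₁def]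
          simp only [Finsupp.filter_apply, if_neg h]
          exact this
      apply hne
      have : b₂ = e₂ := by
        have := hb
        rw [hbe, ← hsum] at this
        exact add_left_cancel this
      rw [hbe, this]
    -- main term
    have he₁le : ∀ x, e₁ x ≤ 1 := fun x => by
      rw [he₁def]; simp only [Finsupp.filter_apply]; split <;> [exact he x; omega]
    have he₂le : ∀ x, e₂ x ≤ 1 := fun x => by
      rw [he₂def]; simp only [Finsupp.filter_apply]; split <;> [exact he x; omega]
    rw [aux_coeff_sum_X_pow (S l₀) (a l₀) e₁ he₁le, ih e₂ he₂le]
    have hsub : e₁.support ⊆ S l₀ := by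
      intro x hx
      rw [hs₁, Finset.mem_filter] at hx
      exact (hS l₀ x).mpr hx.2
    -- big iff
    have hiff : ((e₁.support ⊆ S l₀ ∧ e₁.support.card = a l₀) ∧
        ((∀ x ∈ e₂.support, β x ∈ t) ∧
          (∀ l ∈ t, (e₂.support.filter fun x => β x = l).card = a l))) ↔
        ((∀ x ∈ e.support, β x ∈ insert l₀ t) ∧
          (∀ l ∈ insert l₀ t, (e.support.filter fun x => β x = l).card = a l)) := by
      have hfilter : ∀ l ∈ t, (e₂.support.filter fun x => β x = l) =
          (e.support.filter fun x => β x = l) := by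
        intro l hl
        rw [hs₂, Finset.filter_filter]
        apply Finset.filter_congr
        intro x hx
        constructor
        · rintro ⟨-, h⟩; exact h
        · intro h; exact ⟨fun hc => hl₀ ((h.symm.trans hc) ▸ hl), h⟩
      constructor
      · rintro ⟨⟨-, hc₁⟩, hm₂, hc₂⟩
        refine ⟨?_, ?_⟩
        · intro x hx
          by_cases h : β x = l₀
          · rw [h]; exact Finset.mem_insert_self _ _
          · exact Finset.mem_insert_of_mem (hm₂ x (by rw [hs₂, Finset.mem_filter]; exact ⟨hx, h⟩))
        · intro l hl
          rcases Finset.mem_insert.mp hl with rfl | hl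
          · rw [← hs₁]; exact hc₁
          · rw [← hfilter l hl]; exact hc₂ l hl
      · rintro ⟨hm, hc⟩
        refine ⟨⟨hsub, ?_⟩, ?_, ?_⟩
        · rw [hs₁]; exact hc l₀ (Finset.mem_insert_self _ _)
        · intro x hx
          rw [hs₂, Finset.mem_filter] at hx
          rcases Finset.mem_insert.mp (hm x hx.1) with h | h
          · exact absurd h hx.2
          · exact h
        · intro l hl
          rw [hfilter l hl]; exact hc l (Finset.mem_insert_of_mem hl)
    rw [Finset.prod_insert hl₀]
    by_cases hC : ((∀ x ∈ e.support, β x ∈ insert l₀ t) ∧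
        (∀ l ∈ insert l₀ t, (e.support.filter fun x => β x = l).card = a l))
    · have := hiff.mpr hC
      rw [if_pos ⟨this.1.1, this.1.2⟩, if_pos this.2, if_pos hC]
      push_cast
      ring
    · rw [if_neg hC]
      by_cases h1 : e₁.support ⊆ S l₀ ∧ e₁.support.card = a l₀
      · rw [if_pos h1]
        rw [if_neg, mul_zero]
        intro h2
        exact hC (hiff.mp ⟨h1, h2⟩)
      · rw [if_neg h1, zero_mul]
end ProdLemma

theorem aux_card_fin_filter_lt (N t : ℕ) (ht : t ≤ N) :
    ((Finset.univ : Finset (Fin N)).filter fun j : Fin N => (j : ℕ) < t).card = t := by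
  have key : ((Finset.univ : Finset (Fin N)).filter fun j : Fin N => (j : ℕ) < t) =
      (Finset.range t).attachFin (fun m hm => lt_of_lt_of_le (Finset.mem_range.mp hm) ht) := by
    ext j
    simp [Finset.mem_attachFin, Finset.mem_range]
  rw [key, Finset.card_attachFin, Finset.card_range]

set_option maxHeartbeats 1000000 in
open MvPolynomial in
/-- **Langer, Proposition 2.3.** Let `k` be a field of characteristic `p > 0` and
`2 ≤ i_l ≤ p`. Let `A = k[x₁, ..., xₙ]/(x₁^{i₁}, ..., xₙ^{iₙ})` with its unique divided
power structure `γ` on `I_A = (x₁, ..., xₙ)` satisfying `γ_p(x_l) = 0`, and let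
`B = k[y_{l,j}]/(y_{l,j}²)` with its unique divided power structure `δ` on the ideal `I_B`
generated by the `y_{l,j}` satisfying `δ_p(y_{l,j}) = 0`. Then the `k`-algebra homomorphism
`φ : A → B` determined by `x_l ↦ ∑_j y_{l,j}` is well defined, injective, maps `I_A` into
`I_B`, and is a homomorphism of divided power rings. -/
theorem dpMorphism_sum_of_squares (p : ℕ) (hp : p.Prime)
    {k : Type u} [Field k] [CharP k p]
    (n : ℕ) (i : Fin n → ℕ) (hi : ∀ l, 2 ≤ i l ∧ i l ≤ p)
    (KA : Ideal (MvPolynomial (Fin n) k))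
    (hKA : KA = Ideal.span (Set.range fun l => MvPolynomial.X l ^ i l))
    (KB : Ideal (MvPolynomial ((l : Fin n) × Fin (i l - 1)) k))
    (hKB : KB = Ideal.span (Set.range fun s => MvPolynomial.X s ^ 2))
    (IA : Ideal (MvPolynomial (Fin n) k ⧸ KA))
    (hIA : IA = Ideal.span (Set.range fun l => Ideal.Quotient.mk KA (MvPolynomial.X l)))
    (IB : Ideal (MvPolynomial ((l : Fin n) × Fin (i l - 1)) k ⧸ KB))
    (hIB : IB = Ideal.span (Set.range fun s => Ideal.Quotient.mk KB (MvPolynomial.X s)))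
    (γ : DividedPowers IA)
    (hγ : ∀ l, γ.dpow p (Ideal.Quotient.mk KA (MvPolynomial.X l)) = 0)
    (δ : DividedPowers IB)
    (hδ : ∀ s, δ.dpow p (Ideal.Quotient.mk KB (MvPolynomial.X s)) = 0) :
    ∃ φ : (MvPolynomial (Fin n) k ⧸ KA) →ₐ[k] (MvPolynomial ((l : Fin n) × Fin (i l - 1)) k ⧸ KB),
      (∀ l, φ (Ideal.Quotient.mk KA (MvPolynomial.X l)) =
        ∑ j : Fin (i l - 1), Ideal.Quotient.mk KB (MvPolynomial.X ⟨l, j⟩)) ∧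
      Function.Injective φ ∧
      (∀ x ∈ IA, φ x ∈ IB) ∧
      ∀ (m : ℕ), ∀ x ∈ IA, δ.dpow m (φ x) = φ (γ.dpow m x) := by
  classical
  set z : Fin n → MvPolynomial ((l : Fin n) × Fin (i l - 1)) k :=
    fun l => ∑ j : Fin (i l - 1), X (⟨l, j⟩ : (l : Fin n) × Fin (i l - 1)) with hz
  set w : Fin n → (MvPolynomial ((l : Fin n) × Fin (i l - 1)) k ⧸ KB) :=
    fun l => Ideal.Quotient.mk KB (z l) with hw
  -- basic memberships
  have hysq : ∀ s : (l : Fin n) × Fin (i l - 1), (Ideal.Quotient.mk KB (X s)) ^ 2 = 0 := by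
    intro s
    rw [← map_pow, Ideal.Quotient.eq_zero_iff_mem, hKB]
    exact Ideal.subset_span ⟨s, rfl⟩
  have hyIB : ∀ s : (l : Fin n) × Fin (i l - 1), Ideal.Quotient.mk KB (X s) ∈ IB := fun s =>
    hIB ▸ Ideal.subset_span ⟨s, rfl⟩
  have hwsum : ∀ l, Ideal.Quotient.mk KB (z l) =
      ∑ j : Fin (i l - 1), Ideal.Quotient.mk KB (X (⟨l, j⟩ : (l : Fin n) × Fin (i l - 1))) := fun l => map_sum _ _ _
  have hwIB : ∀ l, w l ∈ IB := by
    intro l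
    show Ideal.Quotient.mk KB (z l) ∈ IB
    rw [hwsum l]
    exact Ideal.sum_mem _ fun j _ => hyIB _
  have hxIA : ∀ l, Ideal.Quotient.mk KA (X l) ∈ IA := fun l =>
    hIA ▸ Ideal.subset_span ⟨l, rfl⟩
  -- powers of w vanish
  have hwpow : ∀ l, (Ideal.Quotient.mk KB (z l)) ^ (i l) = 0 := by
    intro l
    rw [hwsum l]
    apply aux_sum_pow_eq_zero Finset.univ _ (fun j _ => hysq _)
    simp only [Finset.card_univ, Fintype.card_fin]
    have := (hi l).1
    omega
  -- the algebra map
  have h0 : ∀ a ∈ KA, (aeval w) a = 0 := by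
    intro a ha
    rw [hKA] at ha
    have hle : Ideal.span (Set.range fun l => (X l : MvPolynomial (Fin n) k) ^ i l) ≤
        RingHom.ker (aeval w : MvPolynomial (Fin n) k →ₐ[k] _) := by
      rw [Ideal.span_le]
      rintro _ ⟨l, rfl⟩
      rw [SetLike.mem_coe, RingHom.mem_ker, map_pow, aeval_X]
      exact hwpow l
    exact RingHom.mem_ker.mp (hle ha)
  set φ : (MvPolynomial (Fin n) k ⧸ KA) →ₐ[k] (MvPolynomial ((l : Fin n) × Fin (i l - 1)) k ⧸ KB) :=
    Ideal.Quotient.liftₐ KA (aeval w) h0 with hφdef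
  have hφmk : ∀ g, φ (Ideal.Quotient.mk KA g) = aeval w g := fun g => by
    rw [hφdef, Ideal.Quotient.liftₐ_apply]
    rfl
  have hφX : ∀ l, φ (Ideal.Quotient.mk KA (X l)) = w l := fun l => by
    rw [hφmk, aeval_X]
  have hmem : ∀ x ∈ IA, φ x ∈ IB := by
    intro x hx
    rw [hIA] at hx
    have hle : Ideal.span (Set.range fun l => Ideal.Quotient.mk KA (X l)) ≤
        Ideal.comap φ.toRingHom IB := by
      rw [Ideal.span_le]
      rintro _ ⟨l, rfl⟩
      rw [SetLike.mem_coe, Ideal.mem_comap]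
      show φ _ ∈ IB
      rw [hφX l]
      exact hwIB l
    exact Ideal.mem_comap.mp (hle hx)
  -- divided power facts
  have hδy : ∀ s r, 2 ≤ r → δ.dpow r (Ideal.Quotient.mk KB (X s)) = 0 := by
    intro s r hr
    rcases lt_or_ge r p with h | h
    · have hfac : ((r.factorial : k)) ≠ 0 := by
        rw [Ne, CharP.cast_eq_zero_iff k p, hp.dvd_factorial]; omega
      rw [aux_dpow_eq_inv_smul (p := p) k δ (hyIB s) hfac]
      have hpow : (Ideal.Quotient.mk KB (X s)) ^ r = 0 := by
        calc (Ideal.Quotient.mk KB (X s)) ^ r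
            = (Ideal.Quotient.mk KB (X s)) ^ 2 * (Ideal.Quotient.mk KB (X s)) ^ (r - 2) := by
              rw [← pow_add]; congr 1; omega
          _ = 0 := by rw [hysq s, zero_mul]
      rw [hpow, smul_zero]
    · exact aux_dpow_eq_zero_of_ge (p := p) k hp δ (hyIB s) (hδ s) h
  have hδwp : ∀ l, δ.dpow p (w l) = 0 := by
    intro l
    have hcard : (Finset.univ : Finset (Fin (i l - 1))).card < p := by
      simp only [Finset.card_univ, Fintype.card_fin]
      have := hi l
      omega
    have hzero := aux_dpow_sum_eq_zero δ Finset.univ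
      (fun j : Fin (i l - 1) =>
        Ideal.Quotient.mk KB (X (⟨l, j⟩ : (l : Fin n) × Fin (i l - 1))))
      (fun j _ => hyIB _) (fun j _ r hr => hδy _ r hr) p hcard
    show δ.dpow p (Ideal.Quotient.mk KB (z l)) = 0
    rw [hwsum l]
    exact hzero
  have hδw : ∀ l m, p ≤ m → δ.dpow m (w l) = 0 := fun l m hm =>
    aux_dpow_eq_zero_of_ge (p := p) k hp δ (hwIB l) (hδwp l) hm
  have hγx : ∀ l m, p ≤ m → γ.dpow m (Ideal.Quotient.mk KA (X l)) = 0 := fun l m hm =>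
    aux_dpow_eq_zero_of_ge (p := p) k hp γ (hxIA l) (hγ l) hm
  have hgen : ∀ l m, δ.dpow m (φ (Ideal.Quotient.mk KA (X l))) =
      φ (γ.dpow m (Ideal.Quotient.mk KA (X l))) := by
    intro l m
    rcases lt_or_ge m p with h | h
    · have hfac : ((m.factorial : k)) ≠ 0 := by
        rw [Ne, CharP.cast_eq_zero_iff k p, hp.dvd_factorial]; omega
      rw [hφX l, aux_dpow_eq_inv_smul (p := p) k δ (hwIB l) hfac,
        aux_dpow_eq_inv_smul (p := p) k γ (hxIA l) hfac, map_smul, map_pow, hφX l]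
    · rw [hφX l, hδw l m h, hγx l m h, map_zero]
  have hdp : ∀ x ∈ IA, ∀ m, δ.dpow m (φ x) = φ (γ.dpow m x) := by
    intro x hx
    have hx' : x ∈ Ideal.span (Set.range fun l => Ideal.Quotient.mk KA (X l)) := by
      rw [hIA] at hx; exact hx
    clear hx
    induction hx' using Submodule.span_induction with
    | mem y hy => obtain ⟨l, rfl⟩ := hy; exact fun m => hgen l m
    | zero =>
      intro m
      rcases Nat.eq_zero_or_pos m with rfl | hm
      · rw [map_zero, δ.dpow_zero IB.zero_mem, γ.dpow_zero IA.zero_mem, map_one]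
      · rw [map_zero, δ.dpow_eval_zero (by omega), γ.dpow_eval_zero (by omega), map_zero]
    | add y y' hy hy' ihy ihy' =>
      have hyIA : y ∈ IA := by rw [hIA]; exact hy
      have hy'IA : y' ∈ IA := by rw [hIA]; exact hy'
      intro m
      rw [map_add, δ.dpow_add (n := m) (hmem y hyIA) (hmem y' hy'IA), γ.dpow_add (n := m) hyIA hy'IA,
        map_sum]
      apply Finset.sum_congr rfl
      intro uv _
      rw [map_mul, ihy uv.1, ihy' uv.2]
    | smul a y hy ihy =>
      have hyIA : y ∈ IA := by rw [hIA]; exact hy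
      intro m
      rw [smul_eq_mul, map_mul, δ.dpow_mul (n := m) (hmem y hyIA), γ.dpow_mul (n := m) hyIA, map_mul,
        map_pow, ihy m]
  have hinj : Function.Injective φ := by
    rw [injective_iff_map_eq_zero]
    intro u hu
    obtain ⟨f, rfl⟩ := Ideal.Quotient.mk_surjective u
    rw [Ideal.Quotient.eq_zero_iff_mem]
    have hcomp : ∀ g : MvPolynomial (Fin n) k,
        (aeval w) g = Ideal.Quotient.mk KB (aeval z g) := by
      intro g
      have hc : (Ideal.Quotient.mkₐ k KB).comp
          (aeval z : MvPolynomial (Fin n) k →ₐ[k] _) =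
          (aeval w : MvPolynomial (Fin n) k →ₐ[k] _) := by
        apply MvPolynomial.algHom_ext
        intro l
        simp only [AlgHom.comp_apply, aeval_X, Ideal.Quotient.mkₐ_eq_mk]
        rfl
      rw [← hc]
      rfl
    have haz : aeval z f ∈ KB := by
      rw [← Ideal.Quotient.eq_zero_iff_mem, ← hcomp f, ← hφmk f]
      exact hu
    set Good : (Fin n →₀ ℕ) → Prop := fun d => ∀ l, d l < i l with hGood
    set T := f.support.filter Good with hT
    set fg := ∑ d ∈ T, monomial d (coeff d f) with hfg
    set fb := ∑ d ∈ f.support.filter (fun d => ¬ Good d), monomial d (coeff d f) with hfb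
    have hsplit : fg + fb = f := by
      rw [hfg, hfb, hT, Finset.sum_filter_add_sum_filter_not]
      exact (as_sum f).symm
    have hfbKA : fb ∈ KA := by
      rw [hfb]
      apply Ideal.sum_mem
      intro d hd
      rw [Finset.mem_filter] at hd
      have hex : ∃ l, i l ≤ d l := by
        by_contra hc
        push_neg at hc
        exact hd.2 (fun l => hc l)
      obtain ⟨l, hl⟩ := hex
      have hle : Finsupp.single l (i l) ≤ d := Finsupp.single_le_iff.mpr hl
      have hmono : monomial d (coeff d f) =
          monomial (d - Finsupp.single l (i l)) (coeff d f) * (X l ^ i l) := by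
        rw [X_pow_eq_monomial, monomial_mul, mul_one, tsub_add_cancel_of_le hle]
      rw [hmono, hKA]
      exact Ideal.mul_mem_left _ _ (Ideal.subset_span ⟨l, rfl⟩)
    have hKAtoKB : ∀ g ∈ KA, aeval z g ∈ KB := by
      intro g hg
      rw [hKA] at hg
      have hle : Ideal.span (Set.range fun l => (X l : MvPolynomial (Fin n) k) ^ i l) ≤
          Ideal.comap (aeval z : MvPolynomial (Fin n) k →ₐ[k] _).toRingHom KB := by
        rw [Ideal.span_le]
        rintro _ ⟨l, rfl⟩
        rw [SetLike.mem_coe, Ideal.mem_comap]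
        show aeval z (X l ^ i l) ∈ KB
        rw [← Ideal.Quotient.eq_zero_iff_mem, map_pow, aeval_X, map_pow]
        exact hwpow l
      exact Ideal.mem_comap.mp (hle hg)
    have hfgKB : aeval z fg ∈ KB := by
      have hfgeq : fg = f - fb := by rw [← hsplit]; ring
      rw [hfgeq, map_sub]
      exact Ideal.sub_mem _ haz (hKAtoKB fb hfbKA)
    have hfg0 : fg = 0 := by
      by_contra hne
      have hnonempty : fg.support.Nonempty :=
        Finset.nonempty_iff_ne_empty.mpr (fun h => hne (MvPolynomial.support_eq_empty.mp h))
      obtain ⟨a, ha⟩ := hnonempty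
      have hsuppT : fg.support ⊆ T := by
        intro d hd
        rw [hfg] at hd
        have hd2 := MvPolynomial.support_sum hd
        rw [Finset.mem_biUnion] at hd2
        obtain ⟨d', hd', hdd'⟩ := hd2
        have : d ∈ ({d'} : Finset _) := by
          refine Finset.mem_of_subset ?_ hdd'
          rw [MvPolynomial.support_monomial]
          split <;> simp
        rw [Finset.mem_singleton] at this
        rwa [this]
      have haT : a ∈ T := hsuppT ha
      have hag : Good a := (Finset.mem_filter.mp haT).2
      have hafne : coeff a f ≠ 0 :=
        MvPolynomial.mem_support_iff.mp (Finset.mem_filter.mp haT).1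
      -- setup for coefficient computation
      set S : (l : Fin n) → Finset ((l : Fin n) × Fin (i l - 1)) :=
        fun l => Finset.univ.map ⟨Sigma.mk l, sigma_mk_injective⟩ with hS
      have hSmem : ∀ (l : Fin n) (x : (l : Fin n) × Fin (i l - 1)), x ∈ S l ↔ x.1 = l := by
        intro l x
        constructor
        · intro hx
          obtain ⟨j, -, rfl⟩ := Finset.mem_map.mp hx
          rfl
        · intro h
          obtain ⟨l', j⟩ := x
          cases h
          exact Finset.mem_map.mpr ⟨j, Finset.mem_univ _, rfl⟩
      have hzS : ∀ l, z l = ∑ x ∈ S l, X x := by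
        intro l
        show (∑ j : Fin (i l - 1), X (⟨l, j⟩ : (l : Fin n) × Fin (i l - 1))) = _
        rw [Finset.sum_map]
        rfl
      set dd : (Fin n →₀ ℕ) → ((l : Fin n) × Fin (i l - 1)) →₀ ℕ := fun b =>
        Finsupp.equivFunOnFinite.symm (fun x => if (x.2 : ℕ) < b x.1 then 1 else 0) with hdd
      have hdd_apply : ∀ b x, dd b x = if (x.2 : ℕ) < b x.1 then 1 else 0 := fun b x => rfl
      have hdd_le : ∀ b x, dd b x ≤ 1 := by
        intro b x
        rw [hdd_apply]
        split <;> omega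
      have hdd_card : ∀ l, ((dd a).support.filter fun x => x.1 = l).card = a l := by
        intro l
        have hset : ((dd a).support.filter fun x => x.1 = l) =
            (Finset.univ.filter fun j : Fin (i l - 1) => (j : ℕ) < a l).map
              ⟨Sigma.mk l, sigma_mk_injective⟩ := by
          ext x
          rw [Finset.mem_filter, Finsupp.mem_support_iff, hdd_apply]
          constructor
          · rintro ⟨hx1, hx2⟩
            obtain ⟨l', j⟩ := x
            cases hx2
            rw [Finset.mem_map]
            refine ⟨j, ?_, rfl⟩
            rw [Finset.mem_filter]
            refine ⟨Finset.mem_univ _, ?_⟩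
            by_contra hc
            exact hx1 (if_neg hc)
          · intro hx
            obtain ⟨j, hj, rfl⟩ := Finset.mem_map.mp hx
            rw [Finset.mem_filter] at hj
            exact ⟨by simp [hj.2], rfl⟩
        rw [hset, Finset.card_map]
        exact aux_card_fin_filter_lt _ _ (by have h1 := hag l; omega)
      have hcP : ∀ d : Fin n →₀ ℕ,
          coeff (dd a) (∏ l, (∑ x ∈ S l, (X x : MvPolynomial ((l : Fin n) × Fin (i l - 1)) k)) ^ d l) =
          if d = a then ((∏ l, (d l).factorial : ℕ) : k) else 0 := by
        intro d
        rw [aux_coeff_prod Sigma.fst S hSmem (fun l => d l) Finset.univ (dd a) (hdd_le a)]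
        congr 1
        · rw [eq_iff_iff]
          constructor
          · rintro ⟨-, hcard⟩
            ext l
            rw [← hcard l (Finset.mem_univ l), hdd_card l]
          · rintro rfl
            exact ⟨fun x _ => Finset.mem_univ _, fun l _ => hdd_card l⟩
      have hPg : aeval z fg = ∑ d ∈ T, MvPolynomial.C (coeff d f) *
          ∏ l, (∑ x ∈ S l, (X x : MvPolynomial ((l : Fin n) × Fin (i l - 1)) k)) ^ d l := by
        rw [hfg, map_sum]
        apply Finset.sum_congr rfl
        intro d _
        rw [aeval_monomial, ← MvPolynomial.algebraMap_eq]
        congr 1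
        rw [Finsupp.prod]
        rw [Finset.prod_subset (Finset.subset_univ d.support) (fun l _ hl => by
          rw [Finsupp.notMem_support_iff.mp hl, pow_zero])]
        apply Finset.prod_congr rfl
        intro l _
        rw [hzS l]
      have hcoeff : coeff (dd a) (aeval z fg) =
          (coeff a f) * ((∏ l, (a l).factorial : ℕ) : k) := by
        rw [hPg, MvPolynomial.coeff_sum]
        rw [Finset.sum_eq_single_of_mem a haT (fun d _ hd => by
          rw [MvPolynomial.coeff_C_mul, hcP d, if_neg hd, mul_zero])]
        rw [MvPolynomial.coeff_C_mul, hcP a, if_pos rfl]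
      have hzero : coeff (dd a) (aeval z fg) = 0 := by
        by_contra hc
        have hmem2 := MvPolynomial.mem_support_iff.mpr hc
        have hsp := aux_mem_span_pow_support
          (v := fun s : (l : Fin n) × Fin (i l - 1) => s) (c := fun _ => 2)
          (by rw [hKB] at hfgKB; exact hfgKB) (dd a) hmem2
        obtain ⟨t, ht⟩ := hsp
        have ht2 : (2 : ℕ) ≤ dd a t := ht
        have := hdd_le a t
        omega
      rw [hcoeff] at hzero
      have hfacne : ((∏ l, (a l).factorial : ℕ) : k) ≠ 0 := by
        rw [Nat.cast_prod]
        apply Finset.prod_ne_zero_iff.mpr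
        intro l _
        rw [Ne, CharP.cast_eq_zero_iff k p, hp.dvd_factorial]
        have h1 := hag l
        have h2 := (hi l).2
        omega
      exact (mul_ne_zero hafne hfacne) hzero
    rw [← hsplit, hfg0, zero_add]
    exact hfbKA
  exact ⟨φ, fun l => by rw [hφX l]; exact hwsum l, hinj, hmem, fun m x hx => hdp x hx m⟩
end

section
/- Let p be a prime, q = p^r with r ≥ 1, and let (R, m_R) be a local commutative ring with residue field k of characteristic p such that pR ≠ 0, p·m_R = 0, and m_R^{e+1} = 0 for some 1 ≤ e ≤ q − 1. Let i₁, ..., iₙ be positive integers with i_j ≤ q for all j, let I be an ideal of k[x₁, ..., xₙ], and let f₀ ∈ I be a polynomial such that for every multi-index (l₁, ..., lₙ) of a monomial occurring (with nonzero coefficient) in f₀ one has ⌊q·l₁/i₁⌋ + ⋯ + ⌊q·lₙ/iₙ⌋ ≥ e + 1. Set A₀ = k[x₁, ..., xₙ]/((x₁^{i₁}, ..., xₙ^{iₙ}) + I). If A₀ is liftable to the canonical projection R → k = R/m_R, then w_p(f₀^{p^{r−1}}) ∈ (x₁^{i₁}, ..., xₙ^{iₙ}) + I. -/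
open scoped TensorProduct Classical

universe u v w

/-- A `k`-algebra `A₀` is liftable to a surjection `π : R → k` if there is a flat
`R`-algebra `A` together with a `k`-algebra isomorphism `k ⊗_R A ≅ A₀`. -/
def IsLiftable {R : Type u} {k : Type v} [CommRing R] [CommRing k] (π : R →+* k)
    (A₀ : Type w) [CommRing A₀] [Algebra k A₀] : Prop :=
  ∃ (A : Type (max u v w)) (_ : CommRing A) (_ : Algebra R A),
    Module.Flat R A ∧
    (letI : Algebra R k := π.toAlgebra
     Nonempty ((k ⊗[R] A) ≃ₐ[k] A₀))

/-- `wp p f` is the polynomial `w_p(f)` of Langer: writing `f = ∑ᵢ aᵢ x^{Jᵢ}` canonically as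
the sum of its distinct monomial terms, `w_p(f) = ∑_{l₁+⋯+l_m = p, each lⱼ < p}
(1/(l₁!⋯l_m!)) ∏ᵢ (aᵢ x^{Jᵢ})^{lᵢ}`. -/
noncomputable def wp (p : ℕ) [Fact p.Prime] {σ : Type*} {k : Type v} [CommRing k] [CharP k p]
    (f : MvPolynomial σ k) : MvPolynomial σ k :=
  ∑ l ∈ (f.support.piAntidiag p).filter (fun l => ∀ d ∈ f.support, l d < p),
    MvPolynomial.C
      ((ZMod.castHom (dvd_refl p) k) (∏ d ∈ f.support, ((l d).factorial : ZMod p))⁻¹) *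
      ∏ d ∈ f.support, (MvPolynomial.monomial d (f.coeff d)) ^ (l d)

section NT
variable {ι : Type*}

lemma aux_dvd_multinomial {p w : ℕ} (hp : p.Prime) (s : Finset ι) (l : ι → ℕ)
    (hsum : ∑ i ∈ s, l i = p ^ w) (hlt : ∀ i ∈ s, l i < p ^ w) :
    p ∣ Nat.multinomial s l := by
  classical
  have hpos : 0 < p ^ w := pow_pos hp.pos w
  have hex : ∃ i ∈ s, l i ≠ 0 := by
    by_contra h
    push_neg at h
    have : ∑ i ∈ s, l i = 0 := Finset.sum_eq_zero h
    omega
  obtain ⟨i₀, hi₀, hne⟩ := hex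
  have hrw : s = insert i₀ (s.erase i₀) := (Finset.insert_erase hi₀).symm
  rw [hrw, Nat.multinomial_insert (Finset.notMem_erase i₀ s)]
  have hsum' : l i₀ + ∑ i ∈ s.erase i₀, l i = p ^ w := by
    rw [Finset.add_sum_erase s l hi₀]; exact hsum
  rw [hsum']
  exact Dvd.dvd.mul_right
    (Nat.Prime.dvd_choose_pow hp hne (ne_of_lt (hlt i₀ hi₀))) _

lemma aux_mult_div_spec {p : ℕ} (hp : p.Prime) (s : Finset ι) (l : ι → ℕ)
    (hsum : ∑ i ∈ s, l i = p) (hlt : ∀ i ∈ s, l i < p) :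
    (Nat.multinomial s l / p) * ∏ i ∈ s, (l i).factorial = (p - 1).factorial := by
  have hd : p ∣ Nat.multinomial s l := by
    have := aux_dvd_multinomial (w := 1) hp s l (by simpa using hsum)
      (by simpa using hlt)
    exact this
  have hspec := Nat.multinomial_spec s l
  rw [hsum] at hspec
  have hfac : p.factorial = p * (p-1).factorial :=
    (Nat.mul_factorial_pred hp.ne_zero).symm
  obtain ⟨m, hm⟩ := hd
  rw [hm, Nat.mul_div_cancel_left m hp.pos]
  have : (∏ i ∈ s, (l i).factorial) * (p * m) = p * (p-1).factorial := by
    rw [← hm, hspec, hfac]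
  have h2 : p * (m * ∏ i ∈ s, (l i).factorial) = p * (p-1).factorial := by
    ring_nf
    ring_nf at this
    linarith [this]
  exact Nat.eq_of_mul_eq_mul_left hp.pos h2

lemma aux_zmod_coeff {p : ℕ} [Fact p.Prime] (s : Finset ι) (l : ι → ℕ)
    (hsum : ∑ i ∈ s, l i = p) (hlt : ∀ i ∈ s, l i < p) :
    ((Nat.multinomial s l / p : ℕ) : ZMod p)
      = - (∏ i ∈ s, ((l i).factorial : ZMod p))⁻¹ := by
  have hp : p.Prime := Fact.out
  have key := aux_mult_div_spec hp s l hsum hlt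
  have hcast : ((Nat.multinomial s l / p : ℕ) : ZMod p)
      * (∏ i ∈ s, ((l i).factorial : ZMod p)) = -1 := by
    have := congrArg (fun t : ℕ => (t : ZMod p)) key
    simp only [Nat.cast_mul, Nat.cast_prod] at this
    rw [this, ZMod.wilsons_lemma]
  have hne : (∏ i ∈ s, ((l i).factorial : ZMod p)) ≠ 0 := by
    apply Finset.prod_ne_zero_iff.mpr
    intro i hi
    have : ¬ (p ∣ (l i).factorial) := by
      rw [Nat.Prime.dvd_factorial hp]
      exact fun h => absurd h (not_le.mpr (hlt i hi))
    simpa [ZMod.natCast_eq_zero_iff] using this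
  field_simp at hcast ⊢
  linear_combination hcast

end NT


namespace WpAux

open MvPolynomial

variable {n : ℕ} {k : Type*} [Field k] {p : ℕ} [Fact p.Prime] [CharP k p]

lemma monomial_eq_univ (d : Fin n →₀ ℕ) (a : k) :
    monomial d a = C a * ∏ j : Fin n, X j ^ d j := by
  rw [monomial_eq]
  congr 1
  exact Finsupp.prod_fintype d _ (fun j => pow_zero _)

lemma frob_pow (f : MvPolynomial (Fin n) k) (w : ℕ) :
    f ^ p ^ w = ∑ d ∈ f.support, monomial (p ^ w • d) (f.coeff d ^ p ^ w) := by
  have hp : p.Prime := Fact.out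
  haveI : ExpChar (MvPolynomial (Fin n) k) p := by
    have : CharP (MvPolynomial (Fin n) k) p := inferInstance
    exact ExpChar.prime hp
  conv_lhs => rw [f.as_sum]
  rw [sum_pow_char_pow]
  simp only [monomial_pow]

lemma smul_inj (s : ℕ) (hs : s ≠ 0) : Function.Injective (fun d : Fin n →₀ ℕ => s • d) := by
  intro d d' h
  ext j
  have := congrArg (fun (x : Fin n →₀ ℕ) => x j) h
  simp only [Finsupp.smul_apply, smul_eq_mul] at this
  exact Nat.eq_of_mul_eq_mul_left (Nat.pos_of_ne_zero hs) this

variable (p) in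
lemma coeff_frob (f : MvPolynomial (Fin n) k) (w : ℕ) (d : Fin n →₀ ℕ) (hd : d ∈ f.support) :
    (f ^ p ^ w).coeff (p ^ w • d) = f.coeff d ^ p ^ w := by
  have hp : p.Prime := Fact.out
  rw [frob_pow f w, coeff_sum]
  rw [Finset.sum_eq_single d]
  · simp [coeff_monomial]
  · intro d' _ hne
    rw [coeff_monomial, if_neg]
    exact fun h => hne (smul_inj _ (pow_ne_zero w hp.ne_zero) h)
  · intro h; exact absurd hd h

variable (p) in
lemma support_frob (f : MvPolynomial (Fin n) k) (w : ℕ) :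
    (f ^ p ^ w).support = f.support.image (fun d => p ^ w • d) := by
  have hp : p.Prime := Fact.out
  ext D
  simp only [MvPolynomial.mem_support_iff, Finset.mem_image]
  constructor
  · intro hD
    by_contra h
    push_neg at h
    apply hD
    rw [frob_pow f w, coeff_sum]
    apply Finset.sum_eq_zero
    intro d hd
    rw [coeff_monomial, if_neg]
    intro he
    exact (h d (by simpa using hd)) he
  · rintro ⟨d, hd, rfl⟩
    rw [coeff_frob p f w d (by simpa using hd)]
    exact pow_ne_zero _ (by simpa using hd)

end WpAux


namespace WpAux
open MvPolynomial Finset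
variable {n : ℕ} {k : Type*} [Field k] {p : ℕ} [Fact p.Prime] [CharP k p]
lemma wp_frob (f : MvPolynomial (Fin n) k) (w : ℕ) :
    wp p (f ^ p ^ w)
      = ∑ l ∈ (f.support.piAntidiag p).filter (fun l => ∀ d ∈ f.support, l d < p),
        MvPolynomial.C
          ((ZMod.castHom (dvd_refl p) k) (∏ d ∈ f.support, ((l d).factorial : ZMod p))⁻¹) *
          ∏ d ∈ f.support, (MvPolynomial.monomial d (f.coeff d)) ^ (p ^ w * l d) := by
  classical
  have hp : p.Prime := Fact.out
  set s : ℕ := p ^ w with hs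
  have hs0 : s ≠ 0 := pow_ne_zero w hp.ne_zero
  have sinj : Function.Injective (fun d : Fin n →₀ ℕ => s • d) := smul_inj s hs0
  set g : MvPolynomial (Fin n) k := f ^ p ^ w with hgdef
  have hsupp : g.support = f.support.image (fun d => s • d) := support_frob p f w
  have hco : ∀ d ∈ f.support, g.coeff (s • d) = f.coeff d ^ s := fun d hd => coeff_frob p f w d hd
  have hfilter_singleton : ∀ d₀ ∈ f.support,
      f.support.filter (fun d => s • d = s • d₀) = {d₀} := by
    intro d₀ h₀
    ext d
    simp only [mem_filter, mem_singleton]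
    constructor
    · rintro ⟨_, h⟩; exact sinj h
    · rintro rfl; exact ⟨h₀, rfl⟩
  have hfilter_empty : ∀ D, D ∉ g.support →
      f.support.filter (fun d => s • d = D) = ∅ := by
    intro D hD
    rw [Finset.filter_eq_empty_iff]
    intro d hd h
    apply hD
    rw [hsupp, ← h]
    exact Finset.mem_image_of_mem _ hd
  rw [wp]
  refine Finset.sum_nbij' (i := fun l' => fun d => l' (s • d))
    (j := fun l => fun D => ∑ d ∈ f.support.filter (fun d => s • d = D), l d)
    ?_ ?_ ?_ ?_ ?_
  · -- hi : maps LHS set into RHS set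
    intro l' hl'
    simp only [mem_filter, mem_piAntidiag] at hl' ⊢
    obtain ⟨⟨hsum, hsupcond⟩, hlt⟩ := hl'
    refine ⟨⟨?_, ?_⟩, ?_⟩
    · rw [hsupp] at hsum
      rw [Finset.sum_image (fun a _ b _ h => sinj h)] at hsum
      exact hsum
    · intro d hd
      have h1 := hsupcond _ hd
      rw [hsupp] at h1
      obtain ⟨d₁, hd₁, he⟩ := Finset.mem_image.mp h1
      rwa [← sinj he]
    · intro d hd
      exact hlt _ (by rw [hsupp]; exact Finset.mem_image_of_mem _ hd)
  · -- hj
    intro l hl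
    simp only [mem_filter, mem_piAntidiag] at hl ⊢
    obtain ⟨⟨hsum, hsupcond⟩, hlt⟩ := hl
    refine ⟨⟨?_, ?_⟩, ?_⟩
    · rw [hsupp, ← hsum]
      exact Finset.sum_fiberwise_of_maps_to (fun d hd => Finset.mem_image_of_mem _ hd) l
    · intro D hD
      by_contra hDs
      rw [hfilter_empty D hDs, Finset.sum_empty] at hD
      exact hD rfl
    · intro D hD
      rw [hsupp] at hD
      obtain ⟨d₀, hd₀, rfl⟩ := Finset.mem_image.mp hD
      rw [hfilter_singleton d₀ hd₀, Finset.sum_singleton]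
      exact hlt _ hd₀
  · -- left inverse
    intro l' hl'
    simp only [mem_filter, mem_piAntidiag] at hl'
    obtain ⟨⟨hsum, hsupcond⟩, hlt⟩ := hl'
    funext D
    dsimp only
    by_cases hD : D ∈ g.support
    · rw [hsupp] at hD
      obtain ⟨d₀, hd₀, rfl⟩ := Finset.mem_image.mp hD
      rw [hfilter_singleton d₀ hd₀, Finset.sum_singleton]
    · rw [hfilter_empty D hD, Finset.sum_empty]
      by_contra h
      exact hD (hsupcond D (fun hh => h hh.symm))
  · -- right inverse
    intro l hl
    simp only [mem_filter, mem_piAntidiag] at hl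
    obtain ⟨⟨hsum, hsupcond⟩, hlt⟩ := hl
    funext d
    dsimp only
    by_cases hd : d ∈ f.support
    · rw [hfilter_singleton d hd, Finset.sum_singleton]
    · have h1 : f.support.filter (fun d' => s • d' = s • d) = ∅ := by
        rw [Finset.filter_eq_empty_iff]
        intro d' hd' h
        exact hd (sinj h ▸ hd')
      rw [h1, Finset.sum_empty]
      by_contra h
      exact hd (hsupcond d (fun hh => h hh.symm))
  · -- values
    intro l' hl'
    simp only [mem_filter, mem_piAntidiag] at hl'
    obtain ⟨⟨hsum, hsupcond⟩, hlt⟩ := hl'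
    congr 1
    · congr 2
      rw [hsupp, Finset.prod_image (fun a _ b _ h => sinj h)]
    · rw [hsupp, Finset.prod_image (fun a _ b _ h => sinj h)]
      apply Finset.prod_congr rfl
      intro d hd
      rw [hco d hd, monomial_pow, monomial_pow, smul_smul, mul_comm (l' (s • d)) s, ← pow_mul]
end WpAux




namespace WpAux

section Tensor

variable {R k A : Type u} [CommRing R] [Field k] [CommRing A] [Algebra R A] [Algebra R k]

/-- The bilinear map `k → A → A ⧸ (ker π • ⊤)`, `(c, a) ↦ (lift of c) • a`. -/
noncomputable def belowMap (hπ : Function.Surjective (algebraMap R k)) :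
    k →ₗ[R] A →ₗ[R] (A ⧸ ((RingHom.ker (algebraMap R k)) • (⊤ : Submodule R A))) := by
  classical
  set m : Ideal R := RingHom.ker (algebraMap R k) with hm
  set N : Submodule R A := m • (⊤ : Submodule R A) with hN
  have hmem : ∀ x : R, algebraMap R k x = 0 → ∀ a : A, x • a ∈ N := by
    intro x hx a
    exact Submodule.smul_mem_smul (by simpa [hm, RingHom.mem_ker] using hx) Submodule.mem_top
  have hsi : ∀ c : k, algebraMap R k (Function.surjInv hπ c) = c :=
    fun c => Function.surjInv_eq hπ c
  refine LinearMap.mk₂ R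
    (fun (c : k) (a : A) => Submodule.Quotient.mk (p := N) (Function.surjInv hπ c • a))
    ?_ ?_ ?_ ?_
  · intro c₁ c₂ a
    rw [← Submodule.Quotient.mk_add, Submodule.Quotient.eq]
    have : (Function.surjInv hπ (c₁ + c₂) - Function.surjInv hπ c₁ - Function.surjInv hπ c₂)
        • a ∈ N := by
      apply hmem
      simp [map_sub, hsi]
    convert this using 1
    rw [sub_smul, sub_smul]
    abel
  · intro r c a
    rw [← Submodule.Quotient.mk_smul, Submodule.Quotient.eq, ← mul_smul]
    have : (Function.surjInv hπ (r • c) - r * Function.surjInv hπ c) • a ∈ N := by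
      apply hmem
      rw [map_sub, hsi, map_mul, hsi, Algebra.smul_def, sub_self]
    convert this using 1
    rw [sub_smul]
  · intro c a₁ a₂
    rw [smul_add, Submodule.Quotient.mk_add]
  · intro r c a
    rw [← Submodule.Quotient.mk_smul, smul_comm]

lemma belowMap_one (hπ : Function.Surjective (algebraMap R k)) (a : A) :
    belowMap (A := A) hπ 1 a = Submodule.Quotient.mk a := by
  show Submodule.Quotient.mk _ = _
  rw [Submodule.Quotient.eq]
  have : (Function.surjInv hπ (1:k) - 1) • a ∈
      (RingHom.ker (algebraMap R k)) • (⊤ : Submodule R A) := by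
    apply Submodule.smul_mem_smul _ Submodule.mem_top
    simp [RingHom.mem_ker, Function.surjInv_eq hπ]
  convert this using 1
  rw [sub_smul, one_smul]

lemma mem_of_one_tmul_eq_zero (hπ : Function.Surjective (algebraMap R k)) (a : A) (h : (1:k) ⊗ₜ[R] a = 0) :
    a ∈ (RingHom.ker (algebraMap R k)) • (⊤ : Submodule R A) := by
  have := congrArg (TensorProduct.lift (belowMap (A := A) hπ)) h
  rw [map_zero, TensorProduct.lift.tmul, belowMap_one] at this
  rwa [Submodule.Quotient.mk_eq_zero] at this

lemma mem_of_p_smul_eq_zero (hπ : Function.Surjective (algebraMap R k)) [Module.Flat R A] (p : R)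
    (hp0 : ∀ x : R, algebraMap R k x = 0 → p * x = 0)
    (hann : ∀ x : R, p * x = 0 → algebraMap R k x = 0)
    (a : A) (h : p • a = 0) :
    a ∈ (RingHom.ker (algebraMap R k)) • (⊤ : Submodule R A) := by
  classical
  have hsi : ∀ c : k, algebraMap R k (Function.surjInv hπ c) = c :=
    fun c => Function.surjInv_eq hπ c
  -- the injective map k →ₗ[R] R
  have hwd : ∀ c₁ c₂ : k, c₁ = c₂ → p * Function.surjInv hπ c₁ = p * Function.surjInv hπ c₂ :=
    fun c₁ c₂ hc => by rw [hc]
  set jk : k →ₗ[R] R :=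
    { toFun := fun c => p * Function.surjInv hπ c
      map_add' := by
        intro c₁ c₂
        have h1 : p * (Function.surjInv hπ (c₁ + c₂) - Function.surjInv hπ c₁
            - Function.surjInv hπ c₂) = 0 := by
          apply hp0
          simp [map_sub, hsi]
        ring_nf
        ring_nf at h1
        linear_combination h1
      map_smul' := by
        intro r c
        have h1 : p * (Function.surjInv hπ (r • c) - r * Function.surjInv hπ c) = 0 := by
          apply hp0
          rw [map_sub, hsi, map_mul, hsi, Algebra.smul_def, sub_self]
        simp only [RingHom.id_apply, smul_eq_mul]
        linear_combination h1 } with hjk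
  have hjk_inj : Function.Injective jk := by
    intro c₁ c₂ hc
    have h1 : p * (Function.surjInv hπ c₁ - Function.surjInv hπ c₂) = 0 := by
      have : p * Function.surjInv hπ c₁ = p * Function.surjInv hπ c₂ := hc
      ring_nf
      linear_combination this
    have := hann _ h1
    rw [map_sub, hsi, hsi, sub_eq_zero] at this
    exact this
  have hinj : Function.Injective (LinearMap.lTensor A jk) :=
    Module.Flat.lTensor_preserves_injective_linearMap jk hjk_inj
  -- show a ⊗ₜ 1 = 0
  have hp1 : p * Function.surjInv hπ (1:k) = p := by
    have h1 : p * (Function.surjInv hπ (1:k) - 1) = 0 := by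
      apply hp0; simp [map_sub, hsi]
    linear_combination h1
  have htz : (LinearMap.lTensor A jk) (a ⊗ₜ (1:k)) = 0 := by
    rw [LinearMap.lTensor_tmul]
    show a ⊗ₜ[R] (p * Function.surjInv hπ 1) = 0
    rw [hp1]
    have : a ⊗ₜ[R] p = p • (a ⊗ₜ[R] (1:R)) := by
      rw [← TensorProduct.tmul_smul, smul_eq_mul, mul_one]
    rw [this]
    apply (TensorProduct.rid R A).injective
    rw [map_smul, map_zero, TensorProduct.rid_tmul, one_smul, h]
  have haz : a ⊗ₜ[R] (1:k) = 0 := hinj (by rw [htz, map_zero])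
  have := congrArg (TensorProduct.lift ((belowMap (A := A) hπ).flip)) haz
  rw [map_zero, TensorProduct.lift.tmul] at this
  rw [LinearMap.flip_apply, belowMap_one] at this
  rwa [Submodule.Quotient.mk_eq_zero] at this

end Tensor
end WpAux



namespace WpAux

lemma pure_split {ι : Type*} [DecidableEq ι] {A : Type*} [CommRing A] (supp : Finset ι) (T : ι → A)
    (s' : ℕ) (hs' : s' ≠ 0) :
    (∑ d ∈ supp, T d) ^ s'
      = (∑ d ∈ supp, T d ^ s')
        + ∑ l ∈ (supp.piAntidiag s').filter (fun l => ∀ d ∈ supp, l d < s'),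
            (Nat.multinomial supp l : A) * ∏ d ∈ supp, T d ^ l d := by
  classical
  rw [Finset.sum_pow_eq_sum_piAntidiag]
  rw [← Finset.sum_filter_add_sum_filter_not (Finset.piAntidiag supp s')
    (fun l => ∀ d ∈ supp, l d < s')]
  rw [add_comm]
  congr 1
  refine (Finset.sum_bij (i := fun d₀ _ => (fun d => if d = d₀ then s' else 0)) ?_ ?_ ?_ ?_).symm
  · -- maps into the not-filter set
    intro d₀ hd₀
    simp only [Finset.mem_filter, Finset.mem_piAntidiag]
    refine ⟨⟨?_, ?_⟩, ?_⟩
    · rw [Finset.sum_ite_eq' supp d₀ (fun _ => s')]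
      simp [hd₀]
    · intro d hd
      by_cases h : d = d₀
      · subst h; exact hd₀
      · simp [h] at hd
    · push_neg
      exact ⟨d₀, hd₀, by simp⟩
  · -- injective
    intro d₀ h₀ d₁ h₁ hfun
    have := congrFun hfun d₀
    simp only [if_pos rfl] at this
    by_contra hne
    rw [if_neg (fun h => hne h)] at this
    exact hs' this
  · -- surjective
    intro l hl
    simp only [Finset.mem_filter, Finset.mem_piAntidiag] at hl
    obtain ⟨⟨hsum, hsupcond⟩, hnot⟩ := hl
    have hsum' : ∑ d ∈ supp, l d = s' := hsum
    push_neg at hnot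
    obtain ⟨d₀, hd₀, hge⟩ := hnot
    refine ⟨d₀, hd₀, ?_⟩
    have hl0 : l d₀ = s' := by
      have h1 : l d₀ ≤ ∑ d ∈ supp, l d := Finset.single_le_sum (fun _ _ => Nat.zero_le _) hd₀
      omega
    have hrest : ∀ d ∈ supp, d ≠ d₀ → l d = 0 := by
      intro d hd hne
      have h2 : ∑ d ∈ supp, l d = l d₀ + ∑ d ∈ supp.erase d₀, l d :=
        (Finset.add_sum_erase supp l hd₀).symm
      have h3 : ∑ d ∈ supp.erase d₀, l d = 0 := by omega
      have := Finset.sum_eq_zero_iff.mp h3 d (Finset.mem_erase.mpr ⟨hne, hd⟩)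
      exact this
    funext d
    show (if d = d₀ then s' else 0) = l d
    by_cases h : d = d₀
    · subst h; simp [hl0]
    · rw [if_neg h]
      by_cases hd : d ∈ supp
      · exact (hrest d hd h).symm
      · by_contra hne
        exact hd (hsupcond d (fun hh => hne hh.symm))
  · -- values
    intro d₀ hd₀
    have hprodfac : ∏ d ∈ supp, ((if d = d₀ then s' else 0) : ℕ).factorial = s'.factorial := by
      rw [Finset.prod_congr rfl (g := fun d => if d = d₀ then s'.factorial else 1)
        (fun d _ => by by_cases h : d = d₀ <;> simp [h])]
      rw [Finset.prod_ite_eq' supp d₀ (fun _ => s'.factorial), if_pos hd₀]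
    have hmult : Nat.multinomial supp (fun d => if d = d₀ then s' else 0) = 1 := by
      have hspec := Nat.multinomial_spec supp (fun d => if d = d₀ then s' else 0)
      rw [hprodfac] at hspec
      have hsum : ∑ d ∈ supp, (if d = d₀ then s' else 0) = s' := by
        rw [Finset.sum_ite_eq' supp d₀ (fun _ => s')]; simp [hd₀]
      rw [hsum] at hspec
      have hpos : 0 < s'.factorial := Nat.factorial_pos s'
      nlinarith [Nat.multinomial_pos supp (fun d => if d = d₀ then s' else 0)]
    have hprodT : ∏ d ∈ supp, T d ^ (if d = d₀ then s' else 0) = T d₀ ^ s' := by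
      rw [Finset.prod_congr rfl (g := fun d => if d = d₀ then T d ^ s' else 1)
        (fun d _ => by by_cases h : d = d₀ <;> simp [h])]
      rw [Finset.prod_ite_eq' supp d₀ (fun d => T d ^ s'), if_pos hd₀]
    rw [hmult, hprodT]
    simp

end WpAux



namespace WpAux

section NP

variable {R A : Type u} [CommRing R] [CommRing A] [Algebra R A] (m : Ideal R)

/-- `m^j • A` as a submodule. -/
def NP (j : ℕ) : Submodule R A := (m ^ j) • (⊤ : Submodule R A)

lemma NP_zero : NP (A := A) m 0 = ⊤ := by
  rw [NP, pow_zero, Ideal.one_eq_top, Submodule.top_smul]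

lemma NP_mul {j₁ j₂ : ℕ} {a b : A} (ha : a ∈ NP (A := A) m j₁) (hb : b ∈ NP (A := A) m j₂) :
    a * b ∈ NP (A := A) m (j₁ + j₂) := by
  refine Submodule.smul_induction_on ha ?_ ?_
  · intro x hx u _
    refine Submodule.smul_induction_on hb ?_ ?_
    · intro y hy v _
      have h1 : (x • u) * (y • v) = (x * y) • (u * v) := by
        rw [Algebra.smul_def, Algebra.smul_def, Algebra.smul_def, map_mul]; ring
      rw [h1, NP, pow_add]
      exact Submodule.smul_mem_smul (Ideal.mul_mem_mul hx hy) Submodule.mem_top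
    · intro v w hv hw
      rw [mul_add]; exact add_mem hv hw
  · intro u v hu hv
    rw [add_mul]; exact add_mem hu hv

lemma NP_mul_right {j : ℕ} {a : A} (ha : a ∈ NP (A := A) m j) (b : A) :
    a * b ∈ NP (A := A) m j := by
  have := NP_mul m ha (show b ∈ NP (A := A) m 0 by rw [NP_zero]; trivial)
  simpa using this

lemma NP_pow {a : A} (ha : a ∈ NP (A := A) m 1) (t : ℕ) : a ^ t ∈ NP (A := A) m t := by
  induction t with
  | zero => rw [pow_zero, NP_zero]; trivial
  | succ t ih =>
    rw [pow_succ]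
    exact NP_mul m ih ha

lemma NP_prod {ι : Type*} (s : Finset ι) (a : ι → A) (t : ι → ℕ)
    (h : ∀ i ∈ s, a i ∈ NP (A := A) m (t i)) :
    (∏ i ∈ s, a i) ∈ NP (A := A) m (∑ i ∈ s, t i) := by
  classical
  revert h
  induction s using Finset.induction_on with
  | empty => intro _; simp [NP_zero]
  | @insert x s' hx ih =>
    intro h
    rw [Finset.prod_insert hx, Finset.sum_insert hx]
    exact NP_mul m (h x (Finset.mem_insert_self x s'))
      (ih (fun i hi => h i (Finset.mem_insert_of_mem hi)))

lemma NP_le {j₁ j₂ : ℕ} (h : j₁ ≤ j₂) : NP (A := A) m j₂ ≤ NP (A := A) m j₁ :=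
  Submodule.smul_mono_left (Ideal.pow_le_pow_right h)

end NP
end WpAux



set_option maxHeartbeats 1000000 in
/-- **Langer, Theorem 3.4.** Let `p` be prime, `q = p^r` with `r ≥ 1`, and let `(R, m_R)` be
a local ring with residue field `k` of characteristic `p` such that `pR ≠ 0`, `p·m_R = 0`
and `m_R^{e+1} = 0` for some `1 ≤ e ≤ q − 1`. Let `I ⊆ k[x₁, ..., xₙ]` be an ideal and
`f₀ ∈ I` a polynomial such that every multi-index `(l₁, ..., lₙ)` of a monomial of `f₀`
satisfies `⌊q·l₁/i₁⌋ + ⋯ + ⌊q·lₙ/iₙ⌋ ≥ e + 1`, where the `i_j ≤ q` are positive. If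
`A₀ = k[x₁, ..., xₙ]/((x₁^{i₁}, ..., xₙ^{iₙ}) + I)` is liftable to `R → k`, then
`w_p(f₀^{p^{r−1}}) ∈ (x₁^{i₁}, ..., xₙ^{iₙ}) + I`. -/
theorem wp_mem_of_liftable (p : ℕ) [Fact p.Prime] (r : ℕ) (hr : 1 ≤ r)
    {R : Type u} [CommRing R] [IsLocalRing R]
    {k : Type u} [Field k] [CharP k p]
    (π : R →+* k) (hπ : Function.Surjective π)
    (hker : RingHom.ker π = IsLocalRing.maximalIdeal R)
    (hpR : (p : R) ≠ 0)
    (hpm : ∀ x ∈ IsLocalRing.maximalIdeal R, (p : R) * x = 0)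
    (e : ℕ) (he1 : 1 ≤ e) (he2 : e ≤ p ^ r - 1)
    (hme : IsLocalRing.maximalIdeal R ^ (e + 1) = ⊥)
    (n : ℕ) (i : Fin n → ℕ) (hipos : ∀ j, 0 < i j) (hile : ∀ j, i j ≤ p ^ r)
    (I : Ideal (MvPolynomial (Fin n) k))
    (f₀ : MvPolynomial (Fin n) k) (hf₀ : f₀ ∈ I)
    (hmon : ∀ d ∈ f₀.support, e + 1 ≤ ∑ j, p ^ r * d j / i j)
    (K : Ideal (MvPolynomial (Fin n) k))
    (hK : K = Ideal.span (Set.range fun j => MvPolynomial.X j ^ i j) ⊔ I)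
    (hlift : IsLiftable π (MvPolynomial (Fin n) k ⧸ K)) :
    wp p (f₀ ^ p ^ (r - 1)) ∈ K := by
  classical
  have hp : p.Prime := Fact.out
  have hppos : 0 < p ^ r := pow_pos hp.pos r
  have heq1 : e + 1 ≤ p ^ r := by omega
  have hq_eq : p ^ r = p ^ (r - 1) * p := by
    rw [← pow_succ, Nat.sub_add_cancel hr]
  obtain ⟨A, _, _, hflat, hiso⟩ := hlift
  haveI := hflat
  letI : Algebra R k := π.toAlgebra
  obtain ⟨θ⟩ := hiso
  have hπsurj' : Function.Surjective (algebraMap R k) := hπ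
  -- p-facts in R
  have hpk0 : π ((p : ℕ) : R) = 0 := by rw [map_natCast]; exact CharP.cast_eq_zero k p
  have hpmem : ((p : ℕ) : R) ∈ IsLocalRing.maximalIdeal R := by
    rw [← hker]; exact RingHom.mem_ker.mpr hpk0
  have hp2 : ((p : ℕ) : R) * ((p : ℕ) : R) = 0 := hpm _ hpmem
  -- the projection πA : A → A₀
  set πA : A →+* (MvPolynomial (Fin n) k ⧸ K) :=
    (θ.toAlgHom.toRingHom).comp (Algebra.TensorProduct.includeRight.toRingHom) with hπAdef
  have hπA_apply : ∀ a : A, πA a = θ ((1 : k) ⊗ₜ[R] a) := fun a => rfl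
  have hπA_alg : ∀ x : R,
      πA (algebraMap R A x) = algebraMap k (MvPolynomial (Fin n) k ⧸ K) (π x) := by
    intro x
    rw [hπA_apply]
    have h1 : (1 : k) ⊗ₜ[R] (algebraMap R A x) = (π x) ⊗ₜ[R] (1 : A) := by
      rw [Algebra.algebraMap_eq_smul_one, TensorProduct.tmul_smul, TensorProduct.smul_tmul']
      congr 1
      rw [Algebra.smul_def, mul_one]
      rfl
    rw [h1]
    have h2 : (π x) ⊗ₜ[R] (1 : A) = algebraMap k (k ⊗[R] A) (π x) := rfl
    rw [h2, θ.commutes]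
  have halgC : ∀ c : k, algebraMap k (MvPolynomial (Fin n) k ⧸ K) c
      = Ideal.Quotient.mk K (MvPolynomial.C c) := by
    intro c
    rw [← MvPolynomial.algebraMap_eq, Ideal.Quotient.mk_algebraMap]
  -- surjectivity of πA
  have hπA_key : ∀ z : k ⊗[R] A, ∃ a : A, πA a = θ z := by
    intro z
    induction z using TensorProduct.induction_on with
    | zero => exact ⟨0, by rw [map_zero, map_zero]⟩
    | tmul c a =>
      obtain ⟨x, hx⟩ := hπ c
      refine ⟨algebraMap R A x * a, ?_⟩
      rw [map_mul, hπA_alg, hx, hπA_apply]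
      have h3 : c ⊗ₜ[R] a = (algebraMap k (k ⊗[R] A) c) * ((1 : k) ⊗ₜ[R] a) := by
        have h4 : (algebraMap k (k ⊗[R] A) c) = c ⊗ₜ[R] (1 : A) := rfl
        rw [h4, Algebra.TensorProduct.tmul_mul_tmul, mul_one, one_mul]
      rw [h3, map_mul, θ.commutes]
    | add z₁ z₂ h₁ h₂ =>
      obtain ⟨a₁, ha₁⟩ := h₁
      obtain ⟨a₂, ha₂⟩ := h₂
      exact ⟨a₁ + a₂, by rw [map_add, map_add, ha₁, ha₂]⟩
  have hπA_surj : Function.Surjective πA := by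
    intro y
    obtain ⟨z, hz⟩ := θ.surjective y
    obtain ⟨a, ha⟩ := hπA_key z
    exact ⟨a, by rw [ha, hz]⟩
  -- the filtration N j = mR^j • A
  set N : ℕ → Submodule R A := fun j => WpAux.NP (IsLocalRing.maximalIdeal R) j with hNdef
  have hNtriv : ∀ a ∈ N (e + 1), a = 0 := by
    intro a ha
    have h1 : N (e + 1) = (⊥ : Ideal R) • (⊤ : Submodule R A) := by
      rw [hNdef]; show WpAux.NP _ _ = _; rw [WpAux.NP, hme]
    rw [h1, Submodule.bot_smul, Submodule.mem_bot] at ha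
    exact ha
  -- kernel of πA is N 1
  have hker_sub : ∀ a : A, πA a = 0 → a ∈ N 1 := by
    intro a ha
    have h1 : (1 : k) ⊗ₜ[R] a = 0 := by
      apply θ.injective
      rw [map_zero, ← hπA_apply a, ha]
    have h2 := WpAux.mem_of_one_tmul_eq_zero hπsurj' a h1
    have h3 : RingHom.ker (algebraMap R k) = IsLocalRing.maximalIdeal R := hker
    rw [h3] at h2
    show a ∈ WpAux.NP (IsLocalRing.maximalIdeal R) 1
    rw [WpAux.NP, pow_one]
    exact h2
  have hker_sup : ∀ a ∈ N 1, πA a = 0 := by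
    intro a ha
    have ha' : a ∈ (IsLocalRing.maximalIdeal R ^ 1) • (⊤ : Submodule R A) := ha
    refine Submodule.smul_induction_on ha' ?_ ?_
    · intro x hx u _
      rw [pow_one] at hx
      rw [Algebra.smul_def, map_mul, hπA_alg]
      have hx0 : π x = 0 := by
        rw [← hker] at hx; exact RingHom.mem_ker.mp hx
      rw [hx0, map_zero, zero_mul]
    · intro u v hu hv
      rw [map_add, hu, hv, add_zero]
  -- flatness: p • a = 0 → a ∈ N 1
  have hflat_key : ∀ a : A, ((p : ℕ) : R) • a = 0 → a ∈ N 1 := by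
    intro a ha
    have hp0' : ∀ x : R, algebraMap R k x = 0 → ((p : ℕ) : R) * x = 0 := by
      intro x hx
      apply hpm
      rw [← hker]
      exact RingHom.mem_ker.mpr hx
    have hann' : ∀ x : R, ((p : ℕ) : R) * x = 0 → algebraMap R k x = 0 := by
      intro x hx
      by_contra hne
      have hxm : x ∉ IsLocalRing.maximalIdeal R := by
        rw [← hker]
        exact fun h => hne (RingHom.mem_ker.mp h)
      have hunit : IsUnit x := by
        by_contra hnu
        exact hxm (IsLocalRing.mem_maximalIdeal x |>.mpr hnu)
      obtain ⟨u, rfl⟩ := hunit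
      apply hpR
      have h5 := congrArg (fun t => t * ((u⁻¹ : Rˣ) : R)) hx
      simpa [mul_assoc] using h5
    have h2 := WpAux.mem_of_p_smul_eq_zero hπsurj' ((p : ℕ) : R) hp0' hann' a ha
    have h3 : RingHom.ker (algebraMap R k) = IsLocalRing.maximalIdeal R := hker
    rw [h3] at h2
    show a ∈ WpAux.NP (IsLocalRing.maximalIdeal R) 1
    rw [WpAux.NP, pow_one]
    exact h2
  -- p² = 0 in A
  have hpA : ((p : ℕ) : A) = algebraMap R A ((p : ℕ) : R) := by rw [map_natCast]
  have hpA2 : ((p : ℕ) : A) * ((p : ℕ) : A) = 0 := by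
    rw [hpA, ← map_mul, hp2, map_zero]
  -- lifts of the variables
  have hxlift : ∀ j : Fin n, ∃ a : A, πA a = Ideal.Quotient.mk K (MvPolynomial.X j) :=
    fun j => hπA_surj _
  choose xt hxt using hxlift
  -- lifts of the coefficients
  set c : (Fin n →₀ ℕ) → R := fun d => Function.surjInv hπ (f₀.coeff d) with hcdef
  have hc : ∀ d, π (c d) = f₀.coeff d := fun d => Function.surjInv_eq hπ _
  set t : (Fin n →₀ ℕ) → A := fun d => algebraMap R A (c d) * ∏ j, xt j ^ d j with htdef
  -- x^i ∈ N 1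
  have hXK : ∀ j, (MvPolynomial.X j : MvPolynomial (Fin n) k) ^ i j ∈ K := by
    intro j; rw [hK]
    exact Ideal.mem_sup_left (Ideal.subset_span ⟨j, rfl⟩)
  have hxi : ∀ j, xt j ^ i j ∈ N 1 := by
    intro j
    apply hker_sub
    rw [map_pow, hxt, ← map_pow]
    exact Ideal.Quotient.eq_zero_iff_mem.mpr (hXK j)
  -- image of t d
  have hπt : ∀ d, πA (t d) = Ideal.Quotient.mk K (MvPolynomial.monomial d (f₀.coeff d)) := by
    intro d
    show πA (algebraMap R A (c d) * ∏ j, xt j ^ d j) = _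
    rw [map_mul, hπA_alg, hc, halgC, WpAux.monomial_eq_univ, map_mul]
    congr 1
    rw [map_prod, map_prod]
    apply Finset.prod_congr rfl
    intro j _
    rw [map_pow, hxt, map_pow]
  -- vanishing of high monomials
  have hmono0 : ∀ D : Fin n → ℕ, (e + 1) ≤ ∑ j, D j / i j → (∏ j, xt j ^ D j) = 0 := by
    intro D hD
    have hsplit : (∏ j, xt j ^ D j)
        = (∏ j, (xt j ^ i j) ^ (D j / i j)) * ∏ j, xt j ^ (D j % i j) := by
      rw [← Finset.prod_mul_distrib]
      apply Finset.prod_congr rfl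
      intro j _
      rw [← pow_mul, ← pow_add, Nat.div_add_mod]
    have h1 : (∏ j, (xt j ^ i j) ^ (D j / i j))
        ∈ WpAux.NP (IsLocalRing.maximalIdeal R) (∑ j, D j / i j) :=
      WpAux.NP_prod _ Finset.univ _ _ (fun j _ => WpAux.NP_pow _ (hxi j) _)
    have h2 : (∏ j, (xt j ^ i j) ^ (D j / i j)) * (∏ j, xt j ^ (D j % i j)) ∈ N (e + 1) :=
      (WpAux.NP_le _ hD) (WpAux.NP_mul_right _ h1 _)
    rw [hsplit]
    exact hNtriv _ h2
  -- t d ^ p^r = 0 on the support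
  have htq : ∀ d ∈ f₀.support, t d ^ (p ^ r) = 0 := by
    intro d hd
    show (algebraMap R A (c d) * ∏ j, xt j ^ d j) ^ p ^ r = 0
    rw [mul_pow]
    have h1 : (∏ j, xt j ^ d j) ^ p ^ r = ∏ j, xt j ^ (p ^ r * d j) := by
      rw [← Finset.prod_pow]
      apply Finset.prod_congr rfl
      intro j _
      rw [← pow_mul, mul_comm (d j) (p ^ r)]
    rw [h1, hmono0 (fun j => p ^ r * d j) (hmon d hd), mul_zero]
  -- F
  set F : A := ∑ d ∈ f₀.support, t d with hFdef
  have hπF : πA F = 0 := by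
    rw [hFdef, map_sum]
    rw [Finset.sum_congr rfl (fun d _ => hπt d), ← map_sum, ← MvPolynomial.as_sum]
    exact Ideal.Quotient.eq_zero_iff_mem.mpr (by rw [hK]; exact Ideal.mem_sup_right hf₀)
  have hFN : F ∈ N 1 := hker_sub _ hπF
  have hFq : F ^ p ^ r = 0 := by
    apply hNtriv
    exact (WpAux.NP_le _ heq1) (WpAux.NP_pow _ hFN _)
  set s' : ℕ := p ^ (r - 1) with hs'def
  have hs'0 : s' ≠ 0 := pow_ne_zero _ hp.ne_zero
  have hs'p : s' * p = p ^ r := by rw [hs'def, ← hq_eq]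
  set H : A := ∑ d ∈ f₀.support, t d ^ s' with hHdef
  set ε : A := ∑ l ∈ (f₀.support.piAntidiag s').filter (fun l => ∀ d ∈ f₀.support, l d < s'),
      (Nat.multinomial f₀.support l : A) * ∏ d ∈ f₀.support, t d ^ l d with hεdef
  have hFs : F ^ s' = H + ε := by
    rw [hFdef, hHdef, hεdef]
    exact WpAux.pure_split f₀.support t s' hs'0
  have hεmem : ∃ η : A, ε = ((p : ℕ) : A) * η := by
    have hterm : ∀ l ∈ (f₀.support.piAntidiag s').filter
        (fun l => ∀ d ∈ f₀.support, l d < s'),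
        (Nat.multinomial f₀.support l : A) * ∏ d ∈ f₀.support, t d ^ l d
          = ((p : ℕ) : A) * (((Nat.multinomial f₀.support l / p : ℕ) : A)
              * ∏ d ∈ f₀.support, t d ^ l d) := by
      intro l hl
      rw [Finset.mem_filter, Finset.mem_piAntidiag] at hl
      have hdvd : p ∣ Nat.multinomial f₀.support l :=
        aux_dvd_multinomial (w := r - 1) hp f₀.support l
          (by rw [← hs'def]; exact hl.1.1) (fun d hd => by rw [← hs'def]; exact hl.2 d hd)
      obtain ⟨u, hu⟩ := hdvd
      rw [hu, Nat.mul_div_cancel_left u hp.pos]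
      push_cast
      ring
    rw [hεdef, Finset.sum_congr rfl hterm, ← Finset.mul_sum]
    exact ⟨_, rfl⟩
  obtain ⟨η, hη⟩ := hεmem
  have hpε : ((p : ℕ) : A) * ε = 0 := by rw [hη, ← mul_assoc, hpA2, zero_mul]
  have hε2 : ε * ε = 0 := by
    rw [hη]
    calc ((p : ℕ) : A) * η * (((p : ℕ) : A) * η)
        = (((p : ℕ) : A) * ((p : ℕ) : A)) * (η * η) := by ring
      _ = 0 := by rw [hpA2, zero_mul]
  have hHF : H = F ^ s' - ε := by rw [hFs]; ring
  have hHp0 : H ^ p = 0 := by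
    rw [hHF, sub_eq_add_neg, add_pow]
    apply Finset.sum_eq_zero
    intro j hj
    rw [Finset.mem_range, Nat.lt_succ_iff] at hj
    rcases eq_or_lt_of_le hj with hj' | hj'
    · subst hj'
      rw [← pow_mul, hs'p, hFq, zero_mul, zero_mul]
    · by_cases h2 : 2 ≤ p - j
      · have h3 : (-ε) ^ (p - j) = (-ε) ^ (p - j - 2) * (ε * ε) := by
          have h4 : (p - j - 2) + 2 = p - j := by omega
          calc (-ε) ^ (p - j) = (-ε) ^ ((p - j - 2) + 2) := by rw [h4]
            _ = (-ε) ^ (p - j - 2) * ((-ε) * (-ε)) := by rw [pow_add, sq]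
            _ = (-ε) ^ (p - j - 2) * (ε * ε) := by rw [neg_mul_neg]
        rw [h3, hε2, mul_zero, mul_zero, zero_mul]
      · have hpj : p - j = 1 := by omega
        have hj0 : j ≠ 0 := by
          have hple := hp.two_le
          intro hj0
          subst hj0
          omega
        have hdvd : p ∣ p.choose j := hp.dvd_choose_self hj0 hj'
        obtain ⟨u, hu⟩ := hdvd
        rw [hpj, pow_one, hu]
        push_cast
        calc (F ^ s') ^ j * (-ε) * (((p : ℕ) : A) * ((u : ℕ) : A))
            = -((F ^ s') ^ j * ((u : ℕ) : A) * (((p : ℕ) : A) * ε)) := by ring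
          _ = 0 := by rw [hpε, mul_zero, neg_zero]
  -- expansion of H ^ p
  have hpure0 : ∀ d ∈ f₀.support, (t d ^ s') ^ p = 0 := by
    intro d hd
    rw [← pow_mul, hs'p]
    exact htq d hd
  have hHp_exp : H ^ p = ∑ l ∈ (f₀.support.piAntidiag p).filter
      (fun l => ∀ d ∈ f₀.support, l d < p),
      (Nat.multinomial f₀.support l : A) * ∏ d ∈ f₀.support, (t d ^ s') ^ l d := by
    have h0 := WpAux.pure_split f₀.support (fun d => t d ^ s') p hp.ne_zero
    calc H ^ p = (∑ d ∈ f₀.support, t d ^ s') ^ p := by rw [hHdef]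
      _ = (∑ d ∈ f₀.support, (t d ^ s') ^ p)
            + ∑ l ∈ (f₀.support.piAntidiag p).filter
              (fun l => ∀ d ∈ f₀.support, l d < p),
              (Nat.multinomial f₀.support l : A)
                * ∏ d ∈ f₀.support, (t d ^ s') ^ l d := h0
      _ = _ := by rw [Finset.sum_eq_zero hpure0, zero_add]
  set W : A := ∑ l ∈ (f₀.support.piAntidiag p).filter
      (fun l => ∀ d ∈ f₀.support, l d < p),
      ((Nat.multinomial f₀.support l / p : ℕ) : A)
        * ∏ d ∈ f₀.support, (t d ^ s') ^ l d with hWdef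
  have hWp : ((p : ℕ) : A) * W = H ^ p := by
    rw [hWdef, hHp_exp, Finset.mul_sum]
    apply Finset.sum_congr rfl
    intro l hl
    rw [Finset.mem_filter, Finset.mem_piAntidiag] at hl
    have hdvd : p ∣ Nat.multinomial f₀.support l :=
      aux_dvd_multinomial (w := 1) hp _ _ (by rw [hl.1.1, pow_one])
        (fun d hd => by rw [pow_one]; exact hl.2 d hd)
    obtain ⟨u, hu⟩ := hdvd
    rw [hu, Nat.mul_div_cancel_left u hp.pos]
    push_cast
    ring
  have hW0 : ((p : ℕ) : R) • W = 0 := by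
    rw [Algebra.smul_def, ← hpA, hWp, hHp0]
  have hπW : πA W = 0 := hker_sup _ (hflat_key W hW0)
  -- compute πA W as a quotient class
  have hπW' : πA W = Ideal.Quotient.mk K (∑ l ∈ (f₀.support.piAntidiag p).filter
      (fun l => ∀ d ∈ f₀.support, l d < p),
      MvPolynomial.C (((Nat.multinomial f₀.support l / p : ℕ) : k))
        * ∏ d ∈ f₀.support, (MvPolynomial.monomial d (f₀.coeff d)) ^ (s' * l d)) := by
    rw [hWdef, map_sum, map_sum]
    apply Finset.sum_congr rfl
    intro l _
    rw [map_mul, map_mul]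
    congr 1
    · rw [map_natCast πA, ← halgC, map_natCast]
    · rw [map_prod, map_prod]
      apply Finset.prod_congr rfl
      intro d _
      rw [← pow_mul, map_pow, hπt, ← map_pow]
  have hPK : (∑ l ∈ (f₀.support.piAntidiag p).filter
      (fun l => ∀ d ∈ f₀.support, l d < p),
      MvPolynomial.C (((Nat.multinomial f₀.support l / p : ℕ) : k))
        * ∏ d ∈ f₀.support, (MvPolynomial.monomial d (f₀.coeff d)) ^ (s' * l d)) ∈ K := by
    rw [← Ideal.Quotient.eq_zero_iff_mem, ← hπW']
    exact hπW
  -- final identification with wp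
  rw [WpAux.wp_frob f₀ (r - 1)]
  have hterm : ∀ l ∈ (f₀.support.piAntidiag p).filter
      (fun l => ∀ d ∈ f₀.support, l d < p),
      MvPolynomial.C ((ZMod.castHom (dvd_refl p) k)
          (∏ d ∈ f₀.support, ((l d).factorial : ZMod p))⁻¹)
          * ∏ d ∈ f₀.support, (MvPolynomial.monomial d (f₀.coeff d)) ^ (p ^ (r - 1) * l d)
        = - (MvPolynomial.C (((Nat.multinomial f₀.support l / p : ℕ) : k))
          * ∏ d ∈ f₀.support, (MvPolynomial.monomial d (f₀.coeff d)) ^ (s' * l d)) := by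
    intro l hl
    rw [Finset.mem_filter, Finset.mem_piAntidiag] at hl
    have hz := aux_zmod_coeff (p := p) f₀.support l hl.1.1 hl.2
    have hcast : (((Nat.multinomial f₀.support l / p : ℕ) : k))
        = - (ZMod.castHom (dvd_refl p) k)
            (∏ d ∈ f₀.support, ((l d).factorial : ZMod p))⁻¹ := by
      have h6 := congrArg (ZMod.castHom (dvd_refl p) k) hz
      rw [map_natCast] at h6
      rw [h6, map_neg]
    rw [hcast, map_neg, neg_mul, hs'def, neg_neg]
  rw [Finset.sum_congr rfl hterm, Finset.sum_neg_distrib]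
  exact neg_mem hPK
end

section
/- Let k be a field of characteristic p > 0 and let A₀ = k[x₁, ..., xₙ]/(x₁^p, ..., xₙ^p, f₀), where f₀ = y₁ + y₂ + y₃ is a sum of three nonzero monomials, each of total degree ≥ 2, such that each variable xᵢ appears in the product y₁·(y₂y₃)^{p−1} with degree strictly less than p. Then the ideal (x₁, ..., xₙ) of A₀ does not admit a divided power structure. -/
universe u

open Finset MvPolynomial

lemma zmod_key' (p : ℕ) (hp : p.Prime) : ∀ i : ℕ, i ≤ p - 2 →
    ((p-2).choose i : ZMod p) * ((p-1 : ℕ) : ZMod p)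
      = ((i+1).factorial : ZMod p) * ((p-1-i).factorial : ZMod p) := by
  haveI : Fact p.Prime := ⟨hp⟩
  have hp2 : 2 ≤ p := hp.two_le
  have hpm1 : ((p-1 : ℕ) : ZMod p) = -1 := by
    have : ((p-1 : ℕ) : ZMod p) + ((1:ℕ) : ZMod p) = ((p:ℕ) : ZMod p) := by
      rw [← Nat.cast_add]; congr 1; omega
    rw [ZMod.natCast_self] at this
    push_cast at this ⊢
    linear_combination this
  intro i
  induction i with
  | zero =>
      intro _
      simp [Nat.factorial, hpm1, ZMod.wilsons_lemma]
  | succ i ih =>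
      intro hi
      have hii : i ≤ p - 2 := by omega
      have IH := ih hii
      have h1 : ((i+1 : ℕ) : ZMod p) ≠ 0 := by
        rw [Ne, ZMod.natCast_eq_zero_iff]
        intro h
        have := Nat.le_of_dvd (by omega) h
        omega
      apply mul_left_cancel₀ h1
      have hch : (p-2).choose (i+1) * (i+1) = (p-2).choose i * (p-2-i) :=
        Nat.choose_succ_right_eq _ _
      have hch' : ((p-2).choose (i+1) : ZMod p) * ((i+1 : ℕ) : ZMod p)
          = ((p-2).choose i : ZMod p) * ((p-2-i : ℕ) : ZMod p) := by
        exact_mod_cast congrArg (fun t : ℕ => (t : ZMod p)) hch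
      have hfac : (p-1-i).factorial = (p-1-i) * (p-2-i).factorial := by
        have h : p - 1 - i = (p-2-i) + 1 := by omega
        rw [h, Nat.factorial_succ]
      have hfacZ : ((p-1-i).factorial : ZMod p)
          = ((p-1-i : ℕ) : ZMod p) * ((p-2-i).factorial : ZMod p) := by
        exact_mod_cast congrArg (fun t : ℕ => (t : ZMod p)) hfac
      have hfac2Z : ((i+1+1).factorial : ZMod p)
          = ((i+2 : ℕ) : ZMod p) * ((i+1).factorial : ZMod p) := by
        rw [Nat.factorial_succ]
        push_cast; ring
      have e1 : ((p-1-i : ℕ) : ZMod p) = -((i+1 : ℕ) : ZMod p) := by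
    
        have : ((p-1-i : ℕ) : ZMod p) + ((i+1:ℕ) : ZMod p) = ((p:ℕ) : ZMod p) := by
          rw [← Nat.cast_add]; congr 1; omega
        rw [ZMod.natCast_self] at this
        linear_combination this
      have e2 : ((p-2-i : ℕ) : ZMod p) = -((i+2 : ℕ) : ZMod p) := by
        have : ((p-2-i : ℕ) : ZMod p) + ((i+2:ℕ) : ZMod p) = ((p:ℕ) : ZMod p) := by
          rw [← Nat.cast_add]; congr 1; omega
        rw [ZMod.natCast_self] at this
        linear_combination this
      have hidx : p - 1 - (i+1) = p - 2 - i := by omega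
      rw [hidx]
      calc ((i+1:ℕ) : ZMod p) * (((p-2).choose (i+1) : ZMod p) * ((p-1:ℕ) : ZMod p))
          = (((p-2).choose (i+1) : ZMod p) * ((i+1:ℕ) : ZMod p)) * ((p-1:ℕ) : ZMod p) := by ring
        _ = (((p-2).choose i : ZMod p) * ((p-2-i:ℕ) : ZMod p)) * ((p-1:ℕ) : ZMod p) := by
            rw [hch']
        _ = (((p-2).choose i : ZMod p) * ((p-1:ℕ) : ZMod p)) * ((p-2-i:ℕ) : ZMod p) := by ring
        _ = (((i+1).factorial : ZMod p) * ((p-1-i).factorial : ZMod p)) * ((p-2-i:ℕ) : ZMod p) := by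
            rw [IH]
        _ = (((i+1).factorial : ZMod p) * (((p-1-i:ℕ) : ZMod p) * ((p-2-i).factorial : ZMod p)))
              * ((p-2-i:ℕ) : ZMod p) := by rw [hfacZ]
        _ = (((i+1).factorial : ZMod p) * ((p-2-i).factorial : ZMod p))
              * (((p-1-i:ℕ) : ZMod p) * ((p-2-i:ℕ) : ZMod p)) := by ring
        _ = (((i+1).factorial : ZMod p) * ((p-2-i).factorial : ZMod p))
              * ((-((i+1:ℕ) : ZMod p)) * (-((i+2:ℕ) : ZMod p))) := by rw [e1, e2]
        _ = ((i+1:ℕ) : ZMod p) * ((((i+2:ℕ) : ZMod p) * ((i+1).factorial : ZMod p))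
              * ((p-2-i).factorial : ZMod p)) := by ring
        _ = ((i+1:ℕ) : ZMod p) * (((i+1+1).factorial : ZMod p) * ((p-2-i).factorial : ZMod p)) := by
            rw [hfac2Z]

set_option maxHeartbeats 2000000 in
set_option synthInstance.maxHeartbeats 400000 in
/-- **Langer, Corollary 4.2.** Let `k` be a field of characteristic `p > 0` and
`A₀ = k[x₁, ..., xₙ]/(x₁^p, ..., xₙ^p, f₀)`, where `f₀ = y₁ + y₂ + y₃` is a sum of three
nonzero monomials, each of total degree `≥ 2`, such that each variable `xᵢ` appears in the
product `y₁·(y₂y₃)^{p−1}` with degree less than `p`. Then the ideal `(x₁, ..., xₙ)` of `A₀`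
does not admit a divided power structure. -/
theorem no_dividedPowers_of_monomials (p : ℕ) (hp : p.Prime)
    {k : Type u} [Field k] [CharP k p]
    (n : ℕ) (d₁ d₂ d₃ : Fin n →₀ ℕ) (c₁ c₂ c₃ : k)
    (hc₁ : c₁ ≠ 0) (hc₂ : c₂ ≠ 0) (hc₃ : c₃ ≠ 0)
    (hd₁₂ : d₁ ≠ d₂) (hd₁₃ : d₁ ≠ d₃) (hd₂₃ : d₂ ≠ d₃)
    (hdeg₁ : 2 ≤ d₁.sum fun _ e => e) (hdeg₂ : 2 ≤ d₂.sum fun _ e => e)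
    (hdeg₃ : 2 ≤ d₃.sum fun _ e => e)
    (hvar : ∀ a : Fin n, d₁ a + (p - 1) * (d₂ a + d₃ a) < p)
    (f₀ : MvPolynomial (Fin n) k)
    (hf₀ : f₀ = MvPolynomial.monomial d₁ c₁ + MvPolynomial.monomial d₂ c₂ +
      MvPolynomial.monomial d₃ c₃)
    (K : Ideal (MvPolynomial (Fin n) k))
    (hK : K = Ideal.span ((Set.range fun a => MvPolynomial.X a ^ p) ∪ {f₀})) :
    ¬ Nonempty (DividedPowers
      ((Ideal.span (Set.range MvPolynomial.X)).map (Ideal.Quotient.mk K))) := by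
  subst hf₀ hK
  rintro ⟨δ⟩
  haveI : Fact p.Prime := ⟨hp⟩
  have hp2 : 2 ≤ p := hp.two_le
  set y₁ : MvPolynomial (Fin n) k := monomial d₁ c₁ with hy₁
  set y₂ : MvPolynomial (Fin n) k := monomial d₂ c₂ with hy₂
  set y₃ : MvPolynomial (Fin n) k := monomial d₃ c₃ with hy₃
  set f₀ : MvPolynomial (Fin n) k := y₁ + y₂ + y₃ with hf₀
  set K : Ideal (MvPolynomial (Fin n) k) :=
    Ideal.span ((Set.range fun a => MvPolynomial.X a ^ p) ∪ {f₀}) with hK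
  set π : MvPolynomial (Fin n) k →+* MvPolynomial (Fin n) k ⧸ K := Ideal.Quotient.mk K with hπ
  set I := (Ideal.span (Set.range (MvPolynomial.X (R := k) (σ := Fin n)))).map π with hI
  -- support facts
  have hsup2 : ∀ a, d₂ a + d₃ a ≤ 1 := by
    intro a
    by_contra h2
    push_neg at h2
    have : (p-1)*2 ≤ (p-1)*(d₂ a + d₃ a) := Nat.mul_le_mul_left _ h2
    have := hvar a
    omega
  have hsup1 : ∀ a, 1 ≤ d₂ a + d₃ a → d₁ a = 0 := by
    intro a hs
    have : (p-1)*1 ≤ (p-1)*(d₂ a + d₃ a) := Nat.mul_le_mul_left _ hs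
    have := hvar a
    omega
  have hne : ∀ (d : Fin n →₀ ℕ), 2 ≤ d.sum (fun _ e => e) → ∃ a, d a ≠ 0 := by
    intro d hd
    by_contra h
    push_neg at h
    have hd0 : d = 0 := Finsupp.ext fun a => h a
    rw [hd0] at hd
    simp at hd
  obtain ⟨a₁, ha₁⟩ := hne d₁ hdeg₁
  obtain ⟨a₂, ha₂⟩ := hne d₂ hdeg₂
  obtain ⟨a₃, ha₃⟩ := hne d₃ hdeg₃
  have hw₁ : d₂ a₁ = 0 ∧ d₃ a₁ = 0 := by
    by_cases hc : 1 ≤ d₂ a₁ + d₃ a₁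
    · exact absurd (hsup1 a₁ hc) (by omega)
    · omega
  have hw₂ : d₁ a₂ = 0 ∧ d₃ a₂ = 0 := by
    have h1 := hsup1 a₂ (by omega)
    have h2 := hsup2 a₂
    exact ⟨h1, by omega⟩
  have hw₃ : d₁ a₃ = 0 ∧ d₂ a₃ = 0 := by
    have h1 := hsup1 a₃ (by omega)
    have h2 := hsup2 a₃
    exact ⟨h1, by omega⟩
  have huniq : ∀ u v w u' v' w' : ℕ, u•d₁ + v•d₂ + w•d₃ = u'•d₁ + v'•d₂ + w'•d₃ →
      u = u' ∧ v = v' ∧ w = w' := by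
    intro u v w u' v' w' h
    have h1 := DFunLike.congr_fun h a₁
    have h2 := DFunLike.congr_fun h a₂
    have h3 := DFunLike.congr_fun h a₃
    simp only [Finsupp.add_apply, Finsupp.smul_apply, smul_eq_mul] at h1 h2 h3
    rw [hw₁.1, hw₁.2] at h1
    rw [hw₂.1, hw₂.2] at h2
    rw [hw₃.1, hw₃.2] at h3
    simp only [Nat.mul_zero, Nat.add_zero, Nat.zero_add] at h1 h2 h3
    refine ⟨?_, ?_, ?_⟩
    · exact Nat.eq_of_mul_eq_mul_right (Nat.pos_of_ne_zero ha₁) h1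
    · exact Nat.eq_of_mul_eq_mul_right (Nat.pos_of_ne_zero ha₂) h2
    · exact Nat.eq_of_mul_eq_mul_right (Nat.pos_of_ne_zero ha₃) h3
  set mstar : Fin n →₀ ℕ := d₁ + (p-1)•d₂ + (p-1)•d₃ with hmstar_def
  have hmstar : ∀ a, mstar a < p := by
    intro a
    have h := hvar a
    have : mstar a = d₁ a + ((p-1) * d₂ a + (p-1) * d₃ a) := by
      simp [hmstar_def, Finsupp.add_apply, Finsupp.smul_apply, smul_eq_mul, add_assoc]
    rw [this, ← Nat.mul_add]
    exact h
  set M : Ideal (MvPolynomial (Fin n) k) :=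
    Ideal.span (Set.range fun a => MvPolynomial.X (R := k) a ^ p) with hM
  have hmonoM : ∀ (e : Fin n →₀ ℕ) (c : k) (b : Fin n), p ≤ e b → monomial e c ∈ M := by
    intro e c b hb
    have hle : Finsupp.single b p ≤ e := Finsupp.single_le_iff.mpr hb
    have : monomial e c = (X b ^ p) * monomial (e - Finsupp.single b p) c := by
      rw [X_pow_eq_monomial, monomial_mul, one_mul, add_tsub_cancel_of_le hle]
    rw [this]
    exact Ideal.mul_mem_right _ _ (Ideal.subset_span ⟨b, rfl⟩)
  have hMK : M ≤ K := Ideal.span_mono Set.subset_union_left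
  have hfK : f₀ ∈ K := Ideal.subset_span (Set.mem_union_right _ rfl)
  have hXI : ∀ a, π (X a) ∈ I := fun a =>
    Ideal.mem_map_of_mem π (Ideal.subset_span ⟨a, rfl⟩)
  have hmemI : ∀ (d : Fin n →₀ ℕ) (c : k), d ≠ 0 → π (monomial d c) ∈ I := by
    intro d c hd
    obtain ⟨a, ha⟩ : ∃ a, d a ≠ 0 := by
      by_contra h; push_neg at h; exact hd (Finsupp.ext fun a => h a)
    have hle : Finsupp.single a 1 ≤ d := Finsupp.single_le_iff.mpr (by omega)
    have hsplit : monomial d c = monomial (d - Finsupp.single a 1) c * X a := by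
      rw [X, monomial_mul, mul_one, tsub_add_cancel_of_le hle]
    rw [hsplit, map_mul]
    exact Ideal.mul_mem_left _ _ (hXI a)
  -- dpow p of a monomial of degree ≥ 2 vanishes
  have hdp0 : ∀ (d : Fin n →₀ ℕ) (c : k), 2 ≤ d.sum (fun _ e => e) →
      δ.dpow p (π (monomial d c)) = 0 := by
    intro d c hd
    obtain ⟨a, ha⟩ := hne d hd
    have hle : Finsupp.single a 1 ≤ d := Finsupp.single_le_iff.mpr (by omega)
    set v := d - Finsupp.single a 1 with hv_def
    have hv : v ≠ 0 := by
      intro h0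
      have : d = Finsupp.single a 1 := by
        have := tsub_add_cancel_of_le hle
        rw [← this, ← hv_def, h0, zero_add]
      rw [this] at hd
      rw [Finsupp.sum_single_index rfl] at hd
      omega
    have hsplit : monomial d c = monomial v c * X a := by
      rw [X, monomial_mul, mul_one, hv_def, tsub_add_cancel_of_le hle]
    rw [hsplit, map_mul, δ.dpow_mul (n := p) (hXI a)]
    obtain ⟨b, hb⟩ : ∃ b, v b ≠ 0 := by
      by_contra h; push_neg at h; exact hv (Finsupp.ext fun b => h b)
    have hzero : (π (monomial v c))^p = 0 := by
      rw [← map_pow, monomial_pow]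
      have : monomial (p • v) (c ^ p) ∈ K :=
        hMK (hmonoM _ _ b (by
          rw [Finsupp.smul_apply, smul_eq_mul]
          exact Nat.le_mul_of_pos_right p (Nat.pos_of_ne_zero hb)))
      exact Ideal.Quotient.eq_zero_iff_mem.mpr this
    rw [hzero, zero_mul]
  -- factorials invertible in k
  have hfacne : ∀ j : ℕ, j < p → ((j.factorial : ℕ) : k) ≠ 0 := by
    intro j hj h0
    rw [CharP.cast_eq_zero_iff k p] at h0
    rw [Nat.Prime.dvd_factorial hp] at h0
    omega
  -- dpow j of a monomial, j < p
  have hdpj : ∀ (j : ℕ), j < p → ∀ (d : Fin n →₀ ℕ) (c : k), d ≠ 0 →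
      δ.dpow j (π (monomial d c)) =
        π (C ((j.factorial : k))⁻¹) * (π (monomial d c))^j := by
    intro j hj d c hd
    have h := δ.factorial_mul_dpow_eq_pow (n := j) (hmemI d c hd)
    have hcast : ((j.factorial : ℕ) : MvPolynomial (Fin n) k ⧸ K)
        = π (C ((j.factorial : k))) := by
      rw [C_eq_coe_nat, map_natCast]
    have : π (C ((j.factorial : k))⁻¹) * (((j.factorial : ℕ) : MvPolynomial (Fin n) k ⧸ K)
        * δ.dpow j (π (monomial d c))) = δ.dpow j (π (monomial d c)) := by
      rw [hcast, ← mul_assoc, ← map_mul, ← map_mul,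
        inv_mul_cancel₀ (hfacne j hj), map_one, map_one, one_mul]
    rw [← this, h]
  -- the divided power computation: S ∈ K
  set S : MvPolynomial (Fin n) k := ∑ j ∈ Finset.Ioo 0 p,
      C ((j.factorial : k))⁻¹ * C (((p - j).factorial : k))⁻¹ * (y₂ ^ j * y₃ ^ (p - j))
    with hS_def
  have hY2 : π y₂ ∈ I := hmemI d₂ c₂ (by intro h; rw [h] at ha₂; simp at ha₂)
  have hY3 : π y₃ ∈ I := hmemI d₃ c₃ (by intro h; rw [h] at ha₃; simp at ha₃)
  have hY1 : π y₁ ∈ I := hmemI d₁ c₁ (by intro h; rw [h] at ha₁; simp at ha₁)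
  have hzero : δ.dpow p (π y₂ + π y₃) = 0 := by
    have hf0 : π y₁ + π y₂ + π y₃ = 0 := by
      rw [← map_add, ← map_add]
      exact Ideal.Quotient.eq_zero_iff_mem.mpr hfK
    have heq : π y₂ + π y₃ = (-1) * π y₁ := by linear_combination hf0
    rw [heq, δ.dpow_mul (n := p) hY1, hdp0 d₁ c₁ hdeg₁, mul_zero]
  have hadd := δ.dpow_add' (n := p) hY2 hY3
  have hsum : ∑ j ∈ Finset.Ioo 0 p, δ.dpow j (π y₂) * δ.dpow (p - j) (π y₃) = 0 := by
    have hins : Finset.range (p+1) = insert 0 (insert p (Finset.Ioo 0 p)) := by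
      ext x
      simp only [Finset.mem_range, Finset.mem_insert, Finset.mem_Ioo]
      omega
    rw [hzero, hins, Finset.sum_insert (by simp; omega),
      Finset.sum_insert (by simp)] at hadd
    rw [δ.dpow_zero hY2, Nat.sub_zero, hdp0 d₃ c₃ hdeg₃, hdp0 d₂ c₂ hdeg₂] at hadd
    simp only [one_mul, mul_zero, zero_mul, zero_add, add_zero] at hadd
    exact hadd.symm
  have hSK : S ∈ K := by
    rw [← Ideal.Quotient.eq_zero_iff_mem]
    show π S = 0
    rw [hS_def, map_sum]
    rw [← hsum]
    refine Finset.sum_congr rfl ?_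
    intro j hj
    rw [Finset.mem_Ioo] at hj
    rw [hdpj j hj.2 d₂ c₂ (by intro h; rw [h] at ha₂; simp at ha₂),
      hdpj (p - j) (by omega) d₃ c₃ (by intro h; rw [h] at ha₃; simp at ha₃)]
    rw [← hy₂, ← hy₃]
    simp only [map_mul, map_pow]
    ring
  -- trinomial expansion
  have hexp : ∀ m : ℕ, f₀ ^ m = ∑ a ∈ Finset.range (m+1), ∑ b ∈ Finset.range (m - a + 1),
      monomial (a•d₁ + b•d₂ + ((m-a)-b)•d₃)
        (((m.choose a * (m-a).choose b : ℕ) : k) * (c₁^a * (c₂^b * c₃^((m-a)-b)))) := by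
    intro m
    rw [hf₀, add_assoc, add_pow]
    refine Finset.sum_congr rfl fun a ha => ?_
    rw [add_pow, Finset.mul_sum, Finset.sum_mul]
    refine Finset.sum_congr rfl fun b hb => ?_
    rw [hy₁, hy₂, hy₃, monomial_pow, monomial_pow, monomial_pow,
      ← C_eq_coe_nat, ← C_eq_coe_nat, C_apply, C_apply]
    simp only [monomial_mul]
    congr 1
    · abel
    · push_cast
      ring
  -- coefficient extraction
  have hcoeff : ∀ β g : ℕ, β + g + 1 = p - 1 →
      MvPolynomial.coeff (d₁ + β•d₂ + g•d₃) (f₀ ^ (p-1)) =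
        (((p-1) * (p-2).choose β : ℕ) : k) * (c₁ * (c₂^β * c₃^g)) := by
    intro β g hβg
    rw [hexp (p-1), MvPolynomial.coeff_sum]
    rw [Finset.sum_eq_single_of_mem 1 (by rw [Finset.mem_range]; omega)]
    · rw [MvPolynomial.coeff_sum]
      rw [Finset.sum_eq_single_of_mem β (by rw [Finset.mem_range]; omega)]
      · rw [coeff_monomial, if_pos]
        · have h1 : (p-1).choose 1 = p-1 := Nat.choose_one_right _
          have h2 : p-1-1 = p-2 := by omega
          have h3 : p-2-β = g := by omega
          rw [h1, h2, h3, pow_one]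
        · have h3 : (p-1-1) - β = g := by omega
          rw [h3, one_smul]
      · intro b hb hbne
        rw [coeff_monomial, if_neg]
        intro hEq
        rw [one_smul] at hEq
        have h := huniq 1 b ((p-1-1)-b) 1 β g (by rw [one_smul ℕ d₁]; exact hEq)
        exact hbne h.2.1
    · intro a ha hane
      rw [MvPolynomial.coeff_sum]
      refine Finset.sum_eq_zero fun b hb => ?_
      rw [coeff_monomial, if_neg]
      intro hEq
      have h := huniq a b ((p-1-a)-b) 1 β g (by rw [one_smul ℕ d₁]; exact hEq)
      exact hane h.1
  -- S * f₀^(p-1) ∈ M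
  have hSM : S * f₀ ^ (p-1) ∈ M := by
    refine Submodule.span_induction (p := fun g _ => g * f₀ ^ (p-1) ∈ M) ?_ ?_ ?_ ?_ hSK
    · rintro x (⟨a, rfl⟩ | rfl)
      · dsimp only
        exact Ideal.mul_mem_right _ _ (Ideal.subset_span ⟨a, rfl⟩)
      · have hpow : f₀ * f₀ ^ (p-1) = f₀ ^ p := by
          rw [← pow_succ']
          congr 1
          omega
        rw [hpow]
        have hfp : f₀ ^ p = y₁ ^ p + y₂ ^ p + y₃ ^ p := by
          rw [hf₀, add_pow_char, add_pow_char]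
        rw [hfp, hy₁, hy₂, hy₃, monomial_pow, monomial_pow, monomial_pow]
        refine Ideal.add_mem _ (Ideal.add_mem _ ?_ ?_) ?_
        · exact hmonoM _ _ a₁ (by
            rw [Finsupp.smul_apply, smul_eq_mul]
            exact Nat.le_mul_of_pos_right p (Nat.pos_of_ne_zero ha₁))
        · exact hmonoM _ _ a₂ (by
            rw [Finsupp.smul_apply, smul_eq_mul]
            exact Nat.le_mul_of_pos_right p (Nat.pos_of_ne_zero ha₂))
        · exact hmonoM _ _ a₃ (by
            rw [Finsupp.smul_apply, smul_eq_mul]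
            exact Nat.le_mul_of_pos_right p (Nat.pos_of_ne_zero ha₃))
    · show (0 : MvPolynomial (Fin n) k) * f₀ ^ (p - 1) ∈ M
      rw [zero_mul]
      exact Ideal.zero_mem M
    · intro x y _ _ hx hy
      show (x + y) * f₀ ^ (p - 1) ∈ M
      rw [add_mul]
      exact Ideal.add_mem _ hx hy
    · intro c x _ hx
      show (c • x) * f₀ ^ (p - 1) ∈ M
      rw [smul_eq_mul, mul_assoc]
      exact Ideal.mul_mem_left _ _ hx
  -- elements of M have zero coefficient at mstar
  have hcoeffM : ∀ g ∈ M, ∀ r, MvPolynomial.coeff mstar (g * r) = 0 := by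
    intro g hg
    refine Submodule.span_induction ?_ ?_ ?_ ?_ hg
    · rintro x ⟨a, rfl⟩ r
      dsimp only
      rw [X_pow_eq_monomial, coeff_monomial_mul', if_neg]
      rw [Finsupp.single_le_iff]
      push_neg
      exact hmstar a
    · intro r; simp
    · intro x y _ _ hx hy r
      rw [add_mul, MvPolynomial.coeff_add, hx, hy, add_zero]
    · intro c x _ hx r
      rw [smul_eq_mul, show c * x * r = x * (c * r) by ring]
      exact hx (c * r)
  -- the explicit coefficient computation
  have hSF : MvPolynomial.coeff mstar (S * f₀ ^ (p-1)) =
      ((p-1 : ℕ) : k) * (c₁ * (c₂^(p-1) * c₃^(p-1))) := by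
    rw [hS_def, Finset.sum_mul, MvPolynomial.coeff_sum]
    have hterm : ∀ j ∈ Finset.Ioo 0 p,
        MvPolynomial.coeff mstar ((C ((j.factorial : k))⁻¹ * C (((p - j).factorial : k))⁻¹ *
          (y₂ ^ j * y₃ ^ (p - j))) * f₀ ^ (p-1)) = c₁ * (c₂^(p-1) * c₃^(p-1)) := by
      intro j hj
      rw [Finset.mem_Ioo] at hj
      have hmono : C ((j.factorial : k))⁻¹ * C (((p - j).factorial : k))⁻¹ *
          (y₂ ^ j * y₃ ^ (p - j))
          = monomial (j•d₂ + (p-j)•d₃)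
              (((j.factorial : k))⁻¹ * (((p - j).factorial : k))⁻¹ * (c₂^j * c₃^(p-j))) := by
        rw [hy₂, hy₃, monomial_pow, monomial_pow, monomial_mul, ← C_mul, C_mul_monomial]
      rw [hmono]
      have hsplit : mstar = (j•d₂ + (p-j)•d₃) + (d₁ + (p-1-j)•d₂ + (j-1)•d₃) := by
        have h2 : (p-1)•d₂ = j•d₂ + (p-1-j)•d₂ := by rw [← add_smul]; congr 1; omega
        have h3 : (p-1)•d₃ = (p-j)•d₃ + (j-1)•d₃ := by rw [← add_smul]; congr 1; omega
        rw [hmstar_def, h2, h3]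
        abel
      rw [hsplit, coeff_monomial_mul, hcoeff (p-1-j) (j-1) (by omega)]
      have key : (((p-1) * (p-2).choose (p-1-j) : ℕ) : k)
          = ((j.factorial * (p-j).factorial : ℕ) : k) := by
        have hz := zmod_key' p hp (p-1-j) (by omega)
        have e1 : (p-1-j)+1 = p-j := by omega
        have e2 : p-1-(p-1-j) = j := by omega
        rw [e1, e2] at hz
        have hmap := congrArg (ZMod.castHom dvd_rfl k) hz
        simp only [map_mul, map_natCast] at hmap
        push_cast at hmap ⊢
        linear_combination hmap
      rw [key, Nat.cast_mul]
      have hb2 : c₂^j * c₂^(p-1-j) = c₂^(p-1) := by rw [← pow_add]; congr 1; omega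
      have hb3 : c₃^(p-j) * c₃^(j-1) = c₃^(p-1) := by rw [← pow_add]; congr 1; omega
      have hj1 : ((j.factorial : ℕ) : k) ≠ 0 := hfacne j (by omega)
      have hj2 : (((p-j).factorial : ℕ) : k) ≠ 0 := hfacne (p-j) (by omega)
      field_simp
      rw [← hb2, ← hb3]
      ring
    rw [Finset.sum_congr rfl hterm, Finset.sum_const, nsmul_eq_mul, Nat.card_Ioo]
    norm_num
  have h0 : MvPolynomial.coeff mstar (S * f₀ ^ (p-1)) = 0 := by
    have := hcoeffM _ hSM 1
    rwa [mul_one] at this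
  rw [hSF] at h0
  have hne1 : ((p-1 : ℕ) : k) ≠ 0 := by
    rw [Ne, CharP.cast_eq_zero_iff k p]
    intro h
    have := Nat.le_of_dvd (by omega) h
    omega
  exact (mul_ne_zero hne1 (mul_ne_zero hc₁
    (mul_ne_zero (pow_ne_zero _ hc₂) (pow_ne_zero _ hc₃)))) h0
end

section
/- Let p be a prime, q = p^r with r ≥ 1, and let (R, m_R) be a local commutative ring with residue field k = R/m_R of characteristic p such that pR ≠ 0 and m_R^q = 0. Let n = 3q and A₀ = k[x₁, ..., xₙ]/(x₁^q, ..., xₙ^q, f₀), where f₀ = x₁x₂⋯x_q + x_{q+1}x_{q+2}⋯x_{2q} + x_{2q+1}x_{2q+2}⋯x_{3q}. Then A₀ is not liftable to the canonical projection R → k. -/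
open scoped TensorProduct

universe u v w

open MvPolynomial Finset
set_option linter.unusedSectionVars false
set_option maxHeartbeats 1600000
set_option synthInstance.maxHeartbeats 400000
noncomputable section
namespace FrobLift



variable {k : Type*} [CommSemiring k]

variable (q : ℕ) [NeZero q]

/-- Inflate an exponent vector on `Fin 3` to a group-constant exponent vector on
`Fin 3 × Fin q`. -/
noncomputable def inflate (d : Fin 3 →₀ ℕ) : (Fin 3 × Fin q) →₀ ℕ :=
  Finsupp.equivFunOnFinite.symm (fun ca => d ca.1)

@[simp] lemma inflate_apply (d : Fin 3 →₀ ℕ) (ca : Fin 3 × Fin q) :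
    inflate q d ca = d ca.1 := rfl

lemma inflate_injective : Function.Injective (inflate q) := by
  intro d e h
  ext c
  have := DFunLike.congr_fun h (c, (0 : Fin q))
  simpa using this

@[simp] lemma inflate_add (d e : Fin 3 →₀ ℕ) :
    inflate q (d + e) = inflate q d + inflate q e := by
  ext ca; simp

@[simp] lemma inflate_smul (n : ℕ) (d : Fin 3 →₀ ℕ) :
    inflate q (n • d) = n • inflate q d := by
  ext ca; simp

@[simp] lemma inflate_tsub (d e : Fin 3 →₀ ℕ) :
    inflate q (d - e) = inflate q d - inflate q e := by
  ext ca; simp [Finsupp.tsub_apply]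

lemma inflate_le_iff {d e : Fin 3 →₀ ℕ} : inflate q d ≤ inflate q e ↔ d ≤ e := by
  constructor
  · intro h c
    simpa using h (c, (0 : Fin q))
  · intro h ca
    simpa using h ca.1

/-- Extract the group-constant part of a polynomial on `Fin 3 × Fin q`. -/
noncomputable def sigma (P : MvPolynomial (Fin 3 × Fin q) k) : MvPolynomial (Fin 3) k :=
  AddMonoidAlgebra.ofCoeff
    (Finsupp.comapDomain (inflate q) (AddMonoidAlgebra.coeff P) ((inflate_injective q).injOn))

lemma coeff_sigma (P : MvPolynomial (Fin 3 × Fin q) k) (d : Fin 3 →₀ ℕ) :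
    coeff d (sigma q P) = coeff (inflate q d) P := rfl

lemma sigma_add (P Q : MvPolynomial (Fin 3 × Fin q) k) :
    sigma q (P + Q) = sigma q P + sigma q Q := by
  apply MvPolynomial.ext
  intro d
  simp [coeff_sigma]

@[simp] lemma sigma_zero : sigma q (0 : MvPolynomial (Fin 3 × Fin q) k) = 0 := by
  apply MvPolynomial.ext; intro d; simp [coeff_sigma]

lemma sigma_sum {ι : Type*} (s : Finset ι) (f : ι → MvPolynomial (Fin 3 × Fin q) k) :
    sigma q (∑ i ∈ s, f i) = ∑ i ∈ s, sigma q (f i) := by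
  classical
  induction s using Finset.induction_on with
  | empty => simp
  | insert _ _ h ih => rw [Finset.sum_insert h, Finset.sum_insert h, sigma_add, ih]

lemma sigma_monomial (d : Fin 3 →₀ ℕ) (r : k) :
    sigma q (monomial (inflate q d) r) = monomial d r := by
  apply MvPolynomial.ext
  intro e
  classical
  rw [coeff_sigma, coeff_monomial, coeff_monomial]
  by_cases h : d = e
  · simp [h]
  · rw [if_neg (fun hc => h ((inflate_injective q) hc)), if_neg h]

lemma sigma_mul_monomial (g : MvPolynomial (Fin 3 × Fin q) k) (d : Fin 3 →₀ ℕ) (r : k) :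
    sigma q (g * monomial (inflate q d) r) = sigma q g * monomial d r := by
  apply MvPolynomial.ext
  intro e
  classical
  rw [coeff_sigma, coeff_mul_monomial', coeff_mul_monomial']
  by_cases h : d ≤ e
  · rw [if_pos ((inflate_le_iff q).2 h), if_pos h, ← inflate_tsub, ← coeff_sigma]
  · rw [if_neg (fun hc => h ((inflate_le_iff q).1 hc)), if_neg h]

lemma coeff_sigma_mul_X_pow (g : MvPolynomial (Fin 3 × Fin q) k) (s : Fin 3 × Fin q)
    (e : Fin 3 →₀ ℕ) (he : e s.1 < q) :
    coeff e (sigma q (g * X s ^ q)) = 0 := by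
  classical
  rw [coeff_sigma, X_pow_eq_monomial, coeff_mul_monomial', if_neg]
  intro hc
  have := Finsupp.single_le_iff.1 hc
  simp only [inflate_apply] at this
  omega


lemma prod_monomial_one {σ ι : Type*} (s : Finset ι) (f : ι → (σ →₀ ℕ)) :
    ∏ i ∈ s, (monomial (f i) (1 : k)) = monomial (∑ i ∈ s, f i) 1 := by
  classical
  induction s using Finset.induction_on with
  | empty => simp
  | insert _ _ h ih =>
      rw [Finset.prod_insert h, Finset.sum_insert h, ih, monomial_mul, one_mul]

lemma inflate_finset_sum {ι : Type*} (s : Finset ι) (f : ι → (Fin 3 →₀ ℕ)) :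
    inflate q (∑ i ∈ s, f i) = ∑ i ∈ s, inflate q (f i) := by
  ext ca
  rw [Finsupp.finset_sum_apply, inflate_apply, Finsupp.finset_sum_apply]
  rfl

noncomputable def mu (c : Fin 3) : MvPolynomial (Fin 3 × Fin q) k :=
  monomial (inflate q (Finsupp.single c 1)) 1

lemma sum_single_eq_inflate (c : Fin 3) :
    (∑ a : Fin q, Finsupp.single ((c, a) : Fin 3 × Fin q) (1 : ℕ))
      = inflate q (Finsupp.single c 1) := by
  classical
  ext ca
  rw [Finsupp.finset_sum_apply, inflate_apply]
  rcases ca with ⟨c', a'⟩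
  by_cases h : c = c'
  · subst h
    simp [Finsupp.single_apply, Prod.ext_iff]
  · simp [Finsupp.single_apply, Prod.ext_iff, h, Ne.symm h]

lemma mu_eq_prod (c : Fin 3) : (mu q c : MvPolynomial (Fin 3 × Fin q) k)
    = ∏ a : Fin q, X (c, a) := by
  have h1 : ∀ a : Fin q, (X (c, a) : MvPolynomial (Fin 3 × Fin q) k)
      = monomial (Finsupp.single (c, a) 1) 1 := fun a => rfl
  simp_rw [h1, prod_monomial_one, sum_single_eq_inflate]
  rfl

lemma smul_single_eq (c : Fin 3) (n : ℕ) :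
    n • (Finsupp.single c (1 : ℕ)) = Finsupp.single c n := by
  ext c'
  simp [Finsupp.single_apply, mul_ite]

lemma mu_pow (c : Fin 3) (n : ℕ) : (mu q c : MvPolynomial (Fin 3 × Fin q) k) ^ n
    = monomial (inflate q (Finsupp.single c n)) 1 := by
  have h : n • inflate q (Finsupp.single c (1:ℕ)) = inflate q (Finsupp.single c n) := by
    ext ca
    simp [Finsupp.single_apply, mul_ite]
  rw [mu, monomial_pow, one_pow, h]




lemma iota_aux (d : Fin 3 →₀ ℕ) :
    (d.prod fun c n => (mu q c : MvPolynomial (Fin 3 × Fin q) k) ^ n)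
      = monomial (inflate q d) 1 := by
  classical
  rw [Finsupp.prod]
  simp_rw [mu_pow]
  rw [prod_monomial_one, ← inflate_finset_sum]
  congr 1
  have : (∑ c ∈ d.support, Finsupp.single c (d c)) = d := by
    exact Finsupp.sum_single d
  rw [this]

variable (kk : Type*) [Field kk]

/-- The inclusion `k[u,v,w] → k[x_{c,a}]` sending `u,v,w` to the three group monomials. -/
def iota : MvPolynomial (Fin 3) kk →ₐ[kk] MvPolynomial (Fin 3 × Fin q) kk :=
  aeval (fun c => mu q c)

lemma iota_monomial (d : Fin 3 →₀ ℕ) (a : kk) :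
    iota q kk (monomial d a) = monomial (inflate q d) a := by
  rw [iota, aeval_monomial, iota_aux, algebraMap_eq, C_mul_monomial, mul_one]

lemma sigma_iota (P : MvPolynomial (Fin 3) kk) : sigma q (iota q kk P) = P := by
  conv_lhs => rw [as_sum P]
  rw [map_sum, sigma_sum]
  simp_rw [iota_monomial, sigma_monomial]
  exact (as_sum P).symm

/-- Substitution `u ↦ u, v ↦ v, w ↦ -(u+v)`. -/
def psi : MvPolynomial (Fin 3) kk →ₐ[kk] MvPolynomial (Fin 2) kk :=
  aeval ![X 0, X 1, -(X 0 + X 1)]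


section CharSection

variable (p r : ℕ) [hpF : Fact p.Prime]

instance neZeroPPow : NeZero (p ^ r) := ⟨pow_ne_zero _ (Fact.out : p.Prime).ne_zero⟩

variable (kk : Type*) [Field kk] [CharP kk p]

/-- The monomial ideal `(u^q, v^q)` in `k[u,v]`. -/
def T : Ideal (MvPolynomial (Fin 2) kk) :=
  Ideal.span {(X 0 : MvPolynomial (Fin 2) kk) ^ (p ^ r), (X 1 : MvPolynomial (Fin 2) kk) ^ (p ^ r)}

lemma add_pow_q_mem_T :
    ((X 0 + X 1 : MvPolynomial (Fin 2) kk)) ^ (p ^ r) ∈ T p r kk := by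
  rw [add_pow_char_pow]
  exact add_mem (Ideal.subset_span (by simp)) (Ideal.subset_span (by simp))

lemma vec_pow_mem (c : Fin 3) (n : ℕ) (hn : p ^ r ≤ n) :
    ((![X 0, X 1, -(X 0 + X 1)] : Fin 3 → MvPolynomial (Fin 2) kk) c) ^ n ∈ T p r kk := by
  have hsplit : n = (n - p ^ r) + p ^ r := by omega
  fin_cases c
  · show (X 0 : MvPolynomial (Fin 2) kk) ^ n ∈ T p r kk
    rw [hsplit, pow_add]
    exact Ideal.mul_mem_left _ _ (Ideal.subset_span (by simp))
  · show (X 1 : MvPolynomial (Fin 2) kk) ^ n ∈ T p r kk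
    rw [hsplit, pow_add]
    exact Ideal.mul_mem_left _ _ (Ideal.subset_span (by simp))
  · show (-(X 0 + X 1) : MvPolynomial (Fin 2) kk) ^ n ∈ T p r kk
    rw [neg_pow]
    apply Ideal.mul_mem_left
    rw [hsplit, pow_add]
    exact Ideal.mul_mem_left _ _ (add_pow_q_mem_T p r kk)

lemma psi_monomial_mem (e : Fin 3 →₀ ℕ) (a : kk) (c : Fin 3) (hc : p ^ r ≤ e c) :
    psi kk (monomial e a) ∈ T p r kk := by
  rw [psi, aeval_monomial]
  apply Ideal.mul_mem_left
  have hcmem : c ∈ e.support := by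
    rw [Finsupp.mem_support_iff]
    have := (Fact.out : p.Prime).one_lt
    have : 0 < p ^ r := pow_pos (by omega) r
    omega
  rw [Finsupp.prod, ← Finset.mul_prod_erase _ _ hcmem]
  exact Ideal.mul_mem_right _ _ (vec_pow_mem p r kk c (e c) hc)

lemma coeff_T_eq_zero {h : MvPolynomial (Fin 2) kk} (hh : h ∈ T p r kk)
    (d : Fin 2 →₀ ℕ) (h0 : d 0 < p ^ r) (h1 : d 1 < p ^ r) : coeff d h = 0 := by
  classical
  rw [T, Ideal.mem_span_pair] at hh
  obtain ⟨a, b, rfl⟩ := hh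
  rw [coeff_add, X_pow_eq_monomial, X_pow_eq_monomial, coeff_mul_monomial', coeff_mul_monomial',
    if_neg, if_neg, add_zero]
  · intro hc; have := Finsupp.single_le_iff.1 hc; omega
  · intro hc; have := Finsupp.single_le_iff.1 hc; omega


lemma psi_sigma_mem_T {P : MvPolynomial (Fin 3 × Fin (p ^ r)) kk}
    (hP : P ∈ Ideal.span ((Set.range fun s => (X s : MvPolynomial (Fin 3 × Fin (p ^ r)) kk) ^ (p ^ r))
      ∪ {∑ c : Fin 3, ∏ a : Fin (p ^ r), X (c, a)})) :
    psi kk (sigma (p ^ r) P) ∈ T p r kk := by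
  classical
  have H : ∀ g, psi kk (sigma (p ^ r) (g * P)) ∈ T p r kk := by
    induction hP using Submodule.span_induction with
    | mem x hx =>
        rcases hx with ⟨s, rfl⟩ | hx
        · intro g
          rw [as_sum (sigma (p ^ r) (g * X s ^ (p ^ r))), map_sum]
          apply Ideal.sum_mem
          intro e he
          apply psi_monomial_mem p r kk e _ s.1
          by_contra hlt
          rw [MvPolynomial.mem_support_iff] at he
          exact he (coeff_sigma_mul_X_pow (p ^ r) g s e (by omega))
        · rw [Set.mem_singleton_iff] at hx
          subst hx
          intro g
          have hf : (∑ c : Fin 3, ∏ a : Fin (p ^ r), (X (c, a) : MvPolynomial (Fin 3 × Fin (p ^ r)) kk))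
              = mu (p ^ r) 0 + mu (p ^ r) 1 + mu (p ^ r) 2 := by
            rw [Fin.sum_univ_three, mu_eq_prod, mu_eq_prod, mu_eq_prod]
          rw [hf, mul_add, mul_add, sigma_add, sigma_add]
          have hmu : ∀ c : Fin 3, sigma (p ^ r) (g * mu (p ^ r) c)
              = sigma (p ^ r) g * X c := fun c =>
            sigma_mul_monomial (p ^ r) g (Finsupp.single c 1) 1
          rw [hmu 0, hmu 1, hmu 2, ← mul_add, ← mul_add, map_mul]
          have : psi kk ((X 0 : MvPolynomial (Fin 3) kk) + X 1 + X 2) = 0 := by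
            rw [psi, map_add, map_add, aeval_X, aeval_X, aeval_X]
            simp only [Matrix.cons_val_zero, Matrix.cons_val_one, Matrix.head_cons]
            ring_nf
            simp
          rw [this, mul_zero]
          exact zero_mem _
    | zero => intro g; rw [mul_zero, sigma_zero, map_zero]; exact zero_mem _
    | add x y hx hy ihx ihy =>
        intro g
        rw [mul_add, sigma_add, map_add]
        exact add_mem (ihx g) (ihy g)
    | smul a x hx ih =>
        intro g
        rw [smul_eq_mul, ← mul_assoc]
        exact ih (g * a)
  have := H 1
  rwa [one_mul] at this


lemma not_dvd_choose_div (hr : 1 ≤ r) :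
    ¬ p ∣ (p ^ r).choose (p ^ (r - 1)) / p := by
  intro hdvd
  have hp : p.Prime := Fact.out
  have hne : p ^ (r - 1) ≠ 0 := pow_ne_zero _ hp.ne_zero
  have hlt : p ^ (r - 1) < p ^ r := Nat.pow_lt_pow_right hp.one_lt (by omega)
  have hd1 : p ∣ (p ^ r).choose (p ^ (r - 1)) :=
    Nat.Prime.dvd_choose_pow hp hne hlt.ne
  have hd2 : p ^ 2 ∣ (p ^ r).choose (p ^ (r - 1)) := by
    obtain ⟨c, hc⟩ := hdvd
    exact ⟨c, by nlinarith [Nat.div_mul_cancel hd1]⟩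
  have hmul : emultiplicity p ((p ^ r).choose (p ^ (r - 1)))
      = ↑(r - multiplicity p (p ^ (r - 1))) :=
    Nat.Prime.emultiplicity_choose_prime_pow hp hlt.le hne
  have hms : multiplicity p (p ^ (r - 1)) = r - 1 := by
    apply multiplicity_pow_self hp.ne_zero
    simp [Nat.isUnit_iff, hp.ne_one]
  rw [hms, show r - (r - 1) = 1 from by omega] at hmul
  have h2 : (2 : ℕ∞) ≤ emultiplicity p ((p ^ r).choose (p ^ (r - 1))) :=
    pow_dvd_iff_le_emultiplicity.1 hd2
  rw [hmul] at h2
  exact absurd (by exact_mod_cast h2) (by omega)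

lemma pair_apply_zero (i j : ℕ) :
    (Finsupp.single (0 : Fin 2) i + Finsupp.single (1 : Fin 2) j) 0 = i := by
  simp [Finsupp.single_apply]

lemma pair_apply_one (i j : ℕ) :
    (Finsupp.single (0 : Fin 2) i + Finsupp.single (1 : Fin 2) j) 1 = j := by
  simp [Finsupp.single_apply]

lemma coeff_UV (i j i' j' : ℕ) :
    coeff (Finsupp.single 0 i' + Finsupp.single 1 j')
      ((X 0 : MvPolynomial (Fin 2) kk) ^ i * X 1 ^ j)
      = if i = i' ∧ j = j' then 1 else 0 := by
  classical
  rw [X_pow_eq_monomial, X_pow_eq_monomial, monomial_mul, one_mul, coeff_monomial]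
  congr 1
  · rw [eq_iff_iff]
    constructor
    · intro h
      constructor
      · have := DFunLike.congr_fun h 0
        rwa [pair_apply_zero, pair_apply_zero] at this
      · have := DFunLike.congr_fun h 1
        rwa [pair_apply_one, pair_apply_one] at this
    · rintro ⟨rfl, rfl⟩; rfl

theorem key_not_mem (hr : 1 ≤ r) :
    (∑ i ∈ Finset.Ioo 0 (p ^ r),
        (∏ a : Fin (p ^ r), (X ((0 : Fin 3), a) : MvPolynomial (Fin 3 × Fin (p ^ r)) kk)) ^ i
          * (∏ a : Fin (p ^ r), X ((1 : Fin 3), a)) ^ (p ^ r - i)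
          * (((p ^ r).choose i / p : ℕ) : MvPolynomial (Fin 3 × Fin (p ^ r)) kk)
      + ∑ i ∈ Finset.Ioo 0 (p ^ r),
        ((∏ a : Fin (p ^ r), (X ((0 : Fin 3), a) : MvPolynomial (Fin 3 × Fin (p ^ r)) kk))
            + ∏ a : Fin (p ^ r), X ((1 : Fin 3), a)) ^ i
          * (∏ a : Fin (p ^ r), X ((2 : Fin 3), a)) ^ (p ^ r - i)
          * (((p ^ r).choose i / p : ℕ) : MvPolynomial (Fin 3 × Fin (p ^ r)) kk))
    ∉ Ideal.span ((Set.range fun s => (X s : MvPolynomial (Fin 3 × Fin (p ^ r)) kk) ^ (p ^ r))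
        ∪ {∑ c : Fin 3, ∏ a : Fin (p ^ r), X (c, a)}) := by
  classical
  intro hmem
  set q := p ^ r with hq
  -- the corresponding polynomial downstairs
  set E₃ : MvPolynomial (Fin 3) kk :=
    (∑ i ∈ Finset.Ioo 0 q, (X 0 : MvPolynomial (Fin 3) kk) ^ i * X 1 ^ (q - i)
        * ((q.choose i / p : ℕ) : MvPolynomial (Fin 3) kk))
      + ∑ i ∈ Finset.Ioo 0 q, ((X 0 : MvPolynomial (Fin 3) kk) + X 1) ^ i * X 2 ^ (q - i)
        * ((q.choose i / p : ℕ) : MvPolynomial (Fin 3) kk) with hE₃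
  have hiota : iota q kk E₃
      = (∑ i ∈ Finset.Ioo 0 q,
        (∏ a : Fin q, (X ((0 : Fin 3), a) : MvPolynomial (Fin 3 × Fin q) kk)) ^ i
          * (∏ a : Fin q, X ((1 : Fin 3), a)) ^ (q - i)
          * ((q.choose i / p : ℕ) : MvPolynomial (Fin 3 × Fin q) kk)
      + ∑ i ∈ Finset.Ioo 0 q,
        ((∏ a : Fin q, (X ((0 : Fin 3), a) : MvPolynomial (Fin 3 × Fin q) kk))
            + ∏ a : Fin q, X ((1 : Fin 3), a)) ^ i
          * (∏ a : Fin q, X ((2 : Fin 3), a)) ^ (q - i)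
          * ((q.choose i / p : ℕ) : MvPolynomial (Fin 3 × Fin q) kk)) := by
    rw [hE₃]
    simp only [map_add, map_sum, map_mul, map_pow, map_natCast]
    simp only [iota, aeval_X]
    simp_rw [mu_eq_prod]
  rw [← hiota] at hmem
  have hT := psi_sigma_mem_T p r kk hmem
  rw [sigma_iota] at hT
  -- the distinguished exponent vector
  set i₀ := p ^ (r - 1) with hi₀
  have hppos : 1 < p := (Fact.out : p.Prime).one_lt
  have hi₀pos : 0 < i₀ := pow_pos (by omega) _
  have hi₀lt : i₀ < q := Nat.pow_lt_pow_right hppos (by omega)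
  set d₀ : Fin 2 →₀ ℕ := Finsupp.single 0 i₀ + Finsupp.single 1 (q - i₀) with hd₀
  -- coefficient of d₀ in ψ E₃ vanishes
  have hzero : coeff d₀ (psi kk E₃) = 0 := by
    apply coeff_T_eq_zero p r kk hT
    · rw [hd₀, pair_apply_zero]; omega
    · rw [hd₀, pair_apply_one]; omega
  -- compute the coefficient directly
  have hcomp : coeff d₀ (psi kk E₃) = ((q.choose i₀ / p : ℕ) : kk) := by
    rw [hE₃, map_add, map_sum, map_sum, coeff_add]
    have hsecond : (∑ i ∈ Finset.Ioo 0 q,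
        psi kk (((X 0 : MvPolynomial (Fin 3) kk) + X 1) ^ i * X 2 ^ (q - i)
          * ((q.choose i / p : ℕ) : MvPolynomial (Fin 3) kk))) ∈ T p r kk := by
      apply Ideal.sum_mem
      intro i hi
      rw [Finset.mem_Ioo] at hi
      rw [map_mul, map_mul, map_pow, map_pow, map_add, map_natCast]
      simp only [psi, aeval_X]
      simp only [Matrix.cons_val_zero, Matrix.cons_val_one, Matrix.head_cons,
        Matrix.cons_val_two, Matrix.tail_cons]
      have hterm : ((X 0 : MvPolynomial (Fin 2) kk) + X 1) ^ i * (-(X 0 + X 1)) ^ (q - i)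
            * ((q.choose i / p : ℕ) : MvPolynomial (Fin 2) kk)
          = ((-1) ^ (q - i) * ((q.choose i / p : ℕ) : MvPolynomial (Fin 2) kk))
            * ((X 0 + X 1) ^ q) := by
        rw [neg_pow, show (X 0 + X 1 : MvPolynomial (Fin 2) kk) ^ q
            = (X 0 + X 1) ^ i * (X 0 + X 1) ^ (q - i) from by
          rw [← pow_add]; congr 1; omega]
        ring
      rw [hterm]
      exact Ideal.mul_mem_left _ _ (add_pow_q_mem_T p r kk)
    rw [coeff_T_eq_zero p r kk hsecond d₀ (by rw [hd₀, pair_apply_zero]; omega)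
      (by rw [hd₀, pair_apply_one]; omega), add_zero]
    have hterm : ∀ i ∈ Finset.Ioo 0 q,
        coeff d₀ (psi kk ((X 0 : MvPolynomial (Fin 3) kk) ^ i * X 1 ^ (q - i)
          * ((q.choose i / p : ℕ) : MvPolynomial (Fin 3) kk)))
        = if i = i₀ then ((q.choose i / p : ℕ) : kk) else 0 := by
      intro i hi
      rw [Finset.mem_Ioo] at hi
      rw [map_mul, map_mul, map_pow, map_pow, map_natCast]
      simp only [psi, aeval_X]
      simp only [Matrix.cons_val_zero, Matrix.cons_val_one, Matrix.head_cons]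
      rw [← C_eq_coe_nat, mul_comm _ (C _), coeff_C_mul, hd₀, coeff_UV]
      by_cases h : i = i₀
      · rw [if_pos ⟨h, by omega⟩, if_pos h, mul_one]
      · rw [if_neg (fun hc => h hc.1), if_neg h, mul_zero]
    rw [MvPolynomial.coeff_sum, Finset.sum_congr rfl hterm, Finset.sum_ite_eq' (Finset.Ioo 0 q) i₀,
      if_pos (Finset.mem_Ioo.2 ⟨hi₀pos, hi₀lt⟩)]
  rw [hcomp] at hzero
  rw [CharP.cast_eq_zero_iff kk p] at hzero
  exact not_dvd_choose_div p r hr hzero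

end CharSection
end FrobLift


/-- **Langer, Proposition 4.6.** Let `p` be a prime, `q = p^r` with `r ≥ 1`, and let
`(R, m_R)` be a local ring with `pR ≠ 0`, residue field `k = R/m_R` of characteristic `p`,
and `m_R^q = 0`. Let `n = 3q` (variables indexed by `Fin 3 × Fin q`) and
`A₀ = k[x₁, ..., xₙ]/(x₁^q, ..., xₙ^q, f₀)` where
`f₀ = x₁⋯x_q + x_{q+1}⋯x_{2q} + x_{2q+1}⋯x_{3q}`. Then `A₀` is not liftable to the
canonical projection `R → k`. -/
theorem frobenius_neighbourhood_not_liftable (p : ℕ) (hp : p.Prime) (r : ℕ) (hr : 1 ≤ r)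
    {R : Type u} [CommRing R] [IsLocalRing R]
    {k : Type u} [Field k] [CharP k p]
    (π : R →+* k) (hπ : Function.Surjective π)
    (hker : RingHom.ker π = IsLocalRing.maximalIdeal R)
    (hpR : (p : R) ≠ 0)
    (hm : IsLocalRing.maximalIdeal R ^ (p ^ r) = ⊥)
    (f₀ : MvPolynomial (Fin 3 × Fin (p ^ r)) k)
    (hf₀ : f₀ = ∑ c : Fin 3, ∏ a : Fin (p ^ r), MvPolynomial.X (c, a))
    (K : Ideal (MvPolynomial (Fin 3 × Fin (p ^ r)) k))
    (hK : K = Ideal.span ((Set.range fun s => MvPolynomial.X s ^ (p ^ r)) ∪ {f₀})) :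
    ¬ IsLiftable π (MvPolynomial (Fin 3 × Fin (p ^ r)) k ⧸ K) := by
  classical
  haveI : Fact p.Prime := ⟨hp⟩
  rintro ⟨A, _instA, _instRA, hflat, hne⟩
  haveI := hflat
  letI : Algebra R k := π.toAlgebra
  obtain ⟨e⟩ := hne
  -- notation
  set J : Ideal A := Ideal.map (algebraMap R A) (IsLocalRing.maximalIdeal R) with hJ
  -- the reduction map A → A₀
  set ρ : A →+* (MvPolynomial (Fin 3 × Fin (p ^ r)) k ⧸ K) :=
    e.toAlgHom.toRingHom.comp (Algebra.TensorProduct.includeRight (R := R) (A := k) (B := A)).toRingHom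
    with hρdef
  have hρ : ∀ a : A, ρ a = e ((1 : k) ⊗ₜ[R] a) := fun a => rfl
  -- surjectivity of a ↦ 1 ⊗ a
  have hsur : ∀ t : k ⊗[R] A, ∃ a : A, (1 : k) ⊗ₜ[R] a = t := by
    intro t
    induction t using TensorProduct.induction_on with
    | zero => exact ⟨0, TensorProduct.tmul_zero _ _⟩
    | tmul c a =>
        obtain ⟨rc, rfl⟩ := hπ c
        refine ⟨rc • a, ?_⟩
        rw [TensorProduct.tmul_smul, TensorProduct.smul_tmul', Algebra.smul_def, mul_one]
        rfl
    | add x y hx hy =>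
        obtain ⟨a, ha⟩ := hx
        obtain ⟨b, hb⟩ := hy
        exact ⟨a + b, by rw [TensorProduct.tmul_add, ha, hb]⟩
  -- kernel of ρ is contained in J
  have hker0 : ∀ z : A, ρ z = 0 → z ∈ J := by
    intro z hz
    have htens : (1 : k) ⊗ₜ[R] z = 0 := by
      apply e.injective
      rw [map_zero]
      exact hz
    set f : (IsLocalRing.maximalIdeal R) →ₗ[R] R := (IsLocalRing.maximalIdeal R).subtype with hf
    set g : R →ₗ[R] k := Algebra.linearMap R k with hg
    have hgπ : ∀ x : R, g x = π x := fun x => rfl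
    have hexact : Function.Exact f g := by
      rw [LinearMap.exact_iff, Submodule.range_subtype]
      ext x
      have : g x = 0 ↔ π x = 0 := by rw [hgπ]
      rw [LinearMap.mem_ker, this, ← RingHom.mem_ker, hker]
    have hrt : Function.Exact (f.rTensor A) (g.rTensor A) :=
      rTensor_exact A hexact hπ
    have h0 : (g.rTensor A) ((1 : R) ⊗ₜ[R] z) = 0 := by
      rw [LinearMap.rTensor_tmul]
      have : g 1 = 1 := by rw [hgπ, map_one]
      rw [this, htens]
    obtain ⟨v, hv⟩ := (hrt _).1 h0
    have hQ : ∀ w : (IsLocalRing.maximalIdeal R) ⊗[R] A, (TensorProduct.lid R A) ((f.rTensor A) w) ∈ J := by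
      intro w
      induction w using TensorProduct.induction_on with
      | zero => rw [map_zero, map_zero]; exact zero_mem _
      | tmul x a =>
          rw [LinearMap.rTensor_tmul, TensorProduct.lid_tmul]
          have : (x : R) • a = algebraMap R A x * a := Algebra.smul_def _ _
          rw [hf]
          show ((x : R) • a) ∈ J
          rw [this]
          exact Ideal.mul_mem_right _ _ (Ideal.mem_map_of_mem _ x.2)
      | add x y hx hy => rw [map_add, map_add]; exact add_mem hx hy
    have := hQ v
    rw [hv] at this
    rwa [TensorProduct.lid_tmul, one_smul] at this
  -- flatness: p-torsion maps to zero in A₀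
  have hflat0 : ∀ z : A, (p : R) • z = 0 → ρ z = 0 := by
    intro z hz
    set I : Submodule R R := LinearMap.ker (LinearMap.lsmul R R ((p : R))) with hI
    set f' : I →ₗ[R] R := I.subtype with hf'
    set g' : R →ₗ[R] R := LinearMap.lsmul R R ((p : R)) with hg'
    have hexact' : Function.Exact f' g' := by
      rw [LinearMap.exact_iff, Submodule.range_subtype]
    have hrt := Module.Flat.rTensor_exact (M := A) hexact'
    have h0 : (g'.rTensor A) ((1 : R) ⊗ₜ[R] z) = 0 := by
      rw [LinearMap.rTensor_tmul]
      have : g' 1 = (p : R) • (1 : R) := rfl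
      rw [this, TensorProduct.smul_tmul, hz, TensorProduct.tmul_zero]
    obtain ⟨v, hv⟩ := (hrt _).1 h0
    set g : R →ₗ[R] k := Algebra.linearMap R k with hg
    have hcomp0 : g.comp f' = 0 := by
      ext x
      show π (x : R) = 0
      by_contra hne0
      have hxmem : (x : R) ∉ IsLocalRing.maximalIdeal R := by
        rw [← hker]
        exact fun hmem => hne0 hmem
      have hux : IsUnit (x : R) := by
        by_contra hnu
        exact hxmem (IsLocalRing.mem_maximalIdeal _ |>.2 hnu)
      have hpx : (p : R) * (x : R) = 0 := x.2
      obtain ⟨u, hu⟩ := hux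
      rw [← hu] at hpx
      have : (p : R) = 0 := by
        have := congrArg (fun t => t * (↑u⁻¹ : R)) hpx
        simpa [mul_assoc] using this
      exact hpR this
    have htens : (1 : k) ⊗ₜ[R] z = 0 := by
      have h1 : (g.rTensor A) ((1 : R) ⊗ₜ[R] z) = (1 : k) ⊗ₜ[R] z := by
        rw [LinearMap.rTensor_tmul]
        congr 1
        exact map_one π
      rw [← h1, ← hv, ← LinearMap.comp_apply, ← LinearMap.rTensor_comp, hcomp0,
        LinearMap.rTensor_zero, LinearMap.zero_apply]
    rw [hρ, htens, map_zero]
  -- powers of J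
  have hJq : J ^ (p ^ r) = ⊥ := by rw [hJ, ← Ideal.map_pow, hm, Ideal.map_bot]
  have hpowJ : ∀ z : A, z ∈ J → z ^ (p ^ r) = 0 := by
    intro z hz
    have := Ideal.pow_mem_pow hz (p ^ r)
    rwa [hJq, Ideal.mem_bot] at this
  have hprodJ : ∀ f : Fin (p ^ r) → A, (∀ a, f a ∈ J) → ∏ a, f a = 0 := by
    intro f hf
    have key : ∀ s : Finset (Fin (p ^ r)), (∏ a ∈ s, f a) ∈ J ^ s.card := by
      intro s
      induction s using Finset.induction_on with
      | empty => simp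
      | insert _ _ h ih =>
          rw [Finset.prod_insert h, Finset.card_insert_of_notMem h, pow_succ']
          exact Ideal.mul_mem_mul (hf _) ih
    have := key Finset.univ
    rw [Finset.card_univ, Fintype.card_fin, hJq, Ideal.mem_bot] at this
    exact this
  -- choose lifts of the variables
  have hy' : ∀ s : Fin 3 × Fin (p ^ r), ∃ a : A, ρ a = Ideal.Quotient.mk K (X s) := by
    intro s
    obtain ⟨a, ha⟩ := hsur (e.symm (Ideal.Quotient.mk K (X s)))
    refine ⟨a, ?_⟩
    rw [hρ, ha, AlgEquiv.apply_symm_apply]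
  choose y hy using hy'
  set m : Fin 3 → A := fun c => ∏ a : Fin (p ^ r), y (c, a) with hmdef
  have hrm : ∀ c : Fin 3, ρ (m c)
      = Ideal.Quotient.mk K (∏ a : Fin (p ^ r), X (c, a)) := by
    intro c
    rw [hmdef]
    simp only [map_prod]
    exact Finset.prod_congr rfl fun a _ => hy (c, a)
  -- the monomials are nilpotent of exponent q
  have hyq : ∀ s : Fin 3 × Fin (p ^ r), y s ^ (p ^ r) ∈ J := by
    intro s
    apply hker0
    rw [map_pow, hy s, ← map_pow, Ideal.Quotient.eq_zero_iff_mem, hK]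
    exact Ideal.subset_span (Or.inl ⟨s, rfl⟩)
  have hm0 : ∀ c : Fin 3, m c ^ (p ^ r) = 0 := by
    intro c
    rw [hmdef]
    show (∏ a : Fin (p ^ r), y (c, a)) ^ (p ^ r) = 0
    rw [← Finset.prod_pow]
    exact hprodJ _ fun a => hyq (c, a)
  -- the sum of the three monomials is in J
  have hεJ : m 0 + m 1 + m 2 ∈ J := by
    apply hker0
    have : ρ (m 0 + m 1 + m 2) = Ideal.Quotient.mk K f₀ := by
      rw [hf₀, Fin.sum_univ_three, map_add, map_add, hrm 0, hrm 1, hrm 2, map_add, map_add]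
    rw [this, Ideal.Quotient.eq_zero_iff_mem, hK]
    exact Ideal.subset_span (Or.inr rfl)
  have hε0 : (m 0 + m 1 + m 2) ^ (p ^ r) = 0 := hpowJ _ hεJ
  -- binomial expansions
  have h1 := (Commute.all (m 0) (m 1)).add_pow_prime_pow_eq' hp r
  have h2 := (Commute.all (m 0 + m 1) (m 2)).add_pow_prime_pow_eq' hp r
  rw [hm0 0, hm0 1, zero_add, zero_add] at h1
  rw [hε0, h1, hm0 2, add_zero] at h2
  set w : A := (∑ i ∈ Finset.Ioo 0 (p ^ r),
      m 0 ^ i * m 1 ^ (p ^ r - i) * (((p ^ r).choose i / p : ℕ) : A))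
    + ∑ i ∈ Finset.Ioo 0 (p ^ r),
      (m 0 + m 1) ^ i * m 2 ^ (p ^ r - i) * (((p ^ r).choose i / p : ℕ) : A) with hwdef
  have hpw : (p : R) • w = 0 := by
    have : (p : A) * w = 0 := by
      rw [hwdef, mul_add]
      exact h2.symm
    rw [Algebra.smul_def]
    rw [map_natCast]
    exact this
  -- conclude: the obstruction element lies in K
  have hρw : ρ w = 0 := hflat0 w hpw
  have hEK : ((∑ i ∈ Finset.Ioo 0 (p ^ r),
        (∏ a : Fin (p ^ r), (X ((0 : Fin 3), a) : MvPolynomial (Fin 3 × Fin (p ^ r)) k)) ^ i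
          * (∏ a : Fin (p ^ r), X ((1 : Fin 3), a)) ^ (p ^ r - i)
          * (((p ^ r).choose i / p : ℕ) : MvPolynomial (Fin 3 × Fin (p ^ r)) k)
      + ∑ i ∈ Finset.Ioo 0 (p ^ r),
        ((∏ a : Fin (p ^ r), (X ((0 : Fin 3), a) : MvPolynomial (Fin 3 × Fin (p ^ r)) k))
            + ∏ a : Fin (p ^ r), X ((1 : Fin 3), a)) ^ i
          * (∏ a : Fin (p ^ r), X ((2 : Fin 3), a)) ^ (p ^ r - i)
          * (((p ^ r).choose i / p : ℕ) : MvPolynomial (Fin 3 × Fin (p ^ r)) k))) ∈ K := by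
    rw [← Ideal.Quotient.eq_zero_iff_mem, ← hρw, hwdef]
    simp only [map_add, map_sum, map_mul, map_pow, map_natCast, hrm]
  rw [hK, hf₀] at hEK
  exact FrobLift.key_not_mem p r k hr hEK
end
end
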